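/- arXiv:2310.14475 — 4 statements merged into one kernel-verified Lean document; each statement's English description precedes it below -/
import Mathlib

section
/- Let n ≥ 1, φ ∈ 𝓛, and β > 1/2. Then there exists T > 0 such that for all t ≥ T one has 0 ≤ (e^{tΔ}φ)(x) < 1 for every x ∈ ℝⁿ and Ψ_β((e^{tΔ}φ)((1−μ)x + μy)) ≥ (1−μ)Ψ_β((e^{tΔ}φ)(x)) + μΨ_β((e^{tΔ}φ)(y)) for all x, y ∈ ℝⁿ and μ ∈ (0,1); that is, e^{tΔ}φ possesses the eventual β-log-concavity property. -/
open MeasureTheory Filter Set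

noncomputable section

/-- Abbreviation for `ℝⁿ`. -/
abbrev Eucl (n : ℕ) := EuclideanSpace ℝ (Fin n)

/-- The heat flow `(e^{tΔ}φ)(x) = (4πt)^{-n/2} ∫ e^{-|x-y|²/(4t)} φ(y) dy`. -/
def heatFlow (n : ℕ) (φ : Eucl n → ℝ) (t : ℝ) (x : Eucl n) : ℝ :=
  (4 * Real.pi * t) ^ (-(n : ℝ) / 2) * ∫ y : Eucl n, Real.exp (-‖x - y‖ ^ 2 / (4 * t)) * φ y

/-- `U_d[φ](x,t) := (4πt)^d (e^{tΔ}φ)(x)`. -/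
def U (n : ℕ) (d : ℝ) (φ : Eucl n → ℝ) (t : ℝ) (x : Eucl n) : ℝ :=
  (4 * Real.pi * t) ^ d * heatFlow n φ t x

/-- The class `𝓛`: nontrivial, nonnegative, bounded measurable functions with
compact support. -/
def memL (n : ℕ) (φ : Eucl n → ℝ) : Prop :=
  Measurable φ ∧ (∀ x, 0 ≤ φ x) ∧ (∃ C, ∀ x, φ x ≤ C) ∧ HasCompactSupport φ ∧
    0 < ∫ y : Eucl n, φ y

/-- The class `𝓛_A` : members of `𝓛` satisfying condition (A). -/
def memLA (n : ℕ) (φ : Eucl n → ℝ) : Prop :=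
  memL n φ ∧
  ∃ C > (0 : ℝ), ∀ k : ℝ, 1 ≤ k → ∀ ξ z : Eucl n, ‖ξ‖ = 1 →
    essSup (fun y => (inner ℝ (y - z) ξ : ℝ)) (volume.restrict {y : Eucl n | 0 < φ y}) = 0 →
    (∫ y : Eucl n, (inner ℝ y ξ : ℝ) ^ 2 * Real.exp (k * (inner ℝ y ξ : ℝ)) * φ (y - z)) ≤
      C * k⁻¹ ^ 2 * ∫ y : Eucl n, Real.exp (k * (inner ℝ y ξ : ℝ)) * φ (y - z)

/-- `f : ℝⁿ → [0,a)` is `F`-concave, where `F : [0,a) → [-∞,∞)` is represented by its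
(real-valued) restriction to `(0,a)` together with the convention `F(0) = -∞`:
the concavity inequality is automatic when `f(x) = 0` or `f(y) = 0`, and when
`f(x) > 0` and `f(y) > 0` it forces `f((1-μ)x+μy) > 0` together with the real
inequality. -/
def FConcaveOn (n : ℕ) (a : ℝ) (F : ℝ → ℝ) (f : Eucl n → ℝ) : Prop :=
  (∀ x, f x ∈ Set.Ico (0 : ℝ) a) ∧
  ∀ x y : Eucl n, ∀ μ : ℝ, μ ∈ Set.Ioo (0 : ℝ) 1 → 0 < f x → 0 < f y →
    0 < f ((1 - μ) • x + μ • y) ∧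
      (1 - μ) * F (f x) + μ * F (f y) ≤ F (f ((1 - μ) • x + μ • y))

/-- `F`-concavity for `a = ∞`, i.e. for `f : ℝⁿ → [0,∞)`. -/
def FConcaveOnInf (n : ℕ) (F : ℝ → ℝ) (f : Eucl n → ℝ) : Prop :=
  (∀ x, 0 ≤ f x) ∧
  ∀ x y : Eucl n, ∀ μ : ℝ, μ ∈ Set.Ioo (0 : ℝ) 1 → 0 < f x → 0 < f y →
    0 < f ((1 - μ) • x + μ • y) ∧
      (1 - μ) * F (f x) + μ * F (f y) ≤ F (f ((1 - μ) • x + μ • y))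

/-- `F` is admissible on `[0,a)` (with `a` finite): continuous and strictly increasing
on `(0,a)`; the value `F(0) = -∞` is built into the notion of `F`-concavity. -/
def Admissible (a : ℝ) (F : ℝ → ℝ) : Prop :=
  ContinuousOn F (Set.Ioo 0 a) ∧ StrictMonoOn F (Set.Ioo 0 a)

/-- `F` is admissible on `[0,∞)`. -/
def AdmissibleInf (F : ℝ → ℝ) : Prop :=
  ContinuousOn F (Set.Ioi 0) ∧ StrictMonoOn F (Set.Ioi 0)

/-- Condition (F_a) : `F` admissible on `[0,a)`, `F ∈ C²((0,a))`, `F' > 0` on `(0,a)`. -/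
def CondFa (a : ℝ) (F : ℝ → ℝ) : Prop :=
  Admissible a F ∧ ContDiffOn ℝ 2 F (Set.Ioo 0 a) ∧ ∀ x ∈ Set.Ioo (0 : ℝ) a, 0 < deriv F x

/-- `𝓕(r) := F(a e^{-r})`. -/
def calF (a : ℝ) (F : ℝ → ℝ) : ℝ → ℝ := fun r => F (a * Real.exp (-r))

/-- `κ_F(r) := -r 𝓕''(r) / 𝓕'(r)`. -/
def kappaF (a : ℝ) (F : ℝ → ℝ) (r : ℝ) : ℝ :=
  -r * deriv (deriv (calF a F)) r / deriv (calF a F) r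

/-- `σ_F(r) := r (κ_F(r) - 1/2)`. -/
def sigmaF (a : ℝ) (F : ℝ → ℝ) (r : ℝ) : ℝ := r * (kappaF a F r - 1 / 2)

/-- `U_d[φ]` possesses the eventual `F`-concavity property. -/
def EventualFConcave (n : ℕ) (a : ℝ) (F : ℝ → ℝ) (d : ℝ) (φ : Eucl n → ℝ) : Prop :=
  ∃ T > (0 : ℝ), ∀ t ≥ T, FConcaveOn n a F (U n d φ t)

/-- `Ψ_β(τ) = -(-log τ)^β` on `(0,1)` (with `Ψ_β(0) = -∞` by convention). -/
def Psi (β : ℝ) : ℝ → ℝ := fun τ => -(-Real.log τ) ^ β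

/-- The function `h(x) = (4π)^{-1/2} ∫_0^∞ e^{-(x-z)²/4} dz`. -/
def hfun : ℝ → ℝ := fun x =>
  (4 * Real.pi) ^ (-(1 : ℝ) / 2) * ∫ z in Set.Ioi (0 : ℝ), Real.exp (-(x - z) ^ 2 / 4)

/-- `H`, the inverse function of `h` on `(0,1)` (with `H(0) = -∞` by convention). -/
def hotH : ℝ → ℝ := Function.invFun hfun

/-- `Φ_α(τ) = (τ^α - 1)/α` on `(0,∞)` (with `Φ_α(0) = -∞` by convention). -/
def PhiAlpha (α : ℝ) : ℝ → ℝ := fun τ => (τ ^ α - 1) / α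

def Kfun (n : ℕ) (φ : Eucl n → ℝ) (t : ℝ) (p : Eucl n) : ℝ :=
  ∫ y : Eucl n, Real.exp ((inner ℝ p y : ℝ) / (2*t) - ‖y‖^2/(4*t)) * φ y

def gfun (n : ℕ) (φ : Eucl n → ℝ) (t : ℝ) (p : Eucl n) : ℝ :=
  (n:ℝ)/2 * Real.log (4*Real.pi*t) + ‖p‖^2/(4*t) - Real.log (Kfun n φ t p)

-- core polynomial inequality
lemma poly_key {δ t R u E : ℝ} (hδ0 : 0 < δ) (hδ1 : δ ≤ 1/2) (ht : 0 < t)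
    (hR0 : 0 ≤ R) (hu : 0 ≤ u) (hRt : R^2 ≤ δ * t) (hE : 4 * t ≤ E) :
    (2 - 4*δ) * t * (u+R)^2 ≤ ((u-R)^2 + E) * (2*t - R^2) := by
  have h1 : (2 - δ) * t ≤ 2*t - R^2 := by nlinarith
  have hEδ : 4 * R^2 ≤ δ * E := by nlinarith
  have hQ : 0 ≤ (2-δ)*(u-R)^2 + (2-δ)*E - (2-4*δ)*(u+R)^2 := by
    nlinarith [sq_nonneg (3*δ*u - 4*R), mul_nonneg (mul_nonneg hδ0.le hδ0.le) (mul_nonneg hu hR0),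
      mul_nonneg hδ0.le (mul_nonneg hu hR0), hEδ, mul_nonneg hδ0.le (sq_nonneg u),
      mul_nonneg hδ0.le (sq_nonneg R), mul_nonneg hu hR0, sq_nonneg u, sq_nonneg R]
  nlinarith [sq_nonneg (u-R), mul_nonneg (sq_nonneg (u-R)) (sq_nonneg R), mul_pos ht ht]

lemma scalar_key {β δ t R u nd A' Lv L1 L2 : ℝ} (hδ0 : 0 < δ) (hδ1 : δ ≤ 1/2)
    (hδβ : 1 - β ≤ 1/2 - δ)
    (ht : 0 < t) (hR0 : 0 ≤ R) (hu : 0 ≤ u) (hnd : 0 ≤ nd) (hA' : 1 ≤ A')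
    (hRt : R^2 ≤ δ * t)
    (hLlow : (u-R)^2/(4*t) + A' ≤ Lv)
    (hL1 : L1^2 ≤ nd^2*(u+R)^2/(4*t^2))
    (hL2 : nd^2/(2*t) - R^2*nd^2/(4*t^2) ≤ L2) :
    0 ≤ Lv * L2 + (β - 1) * L1^2 := by
  have hLvpos : 0 < Lv := by nlinarith [sq_nonneg (u-R), div_nonneg (sq_nonneg (u-R)) (by linarith : (0:ℝ) ≤ 4*t)]
  have hlow2 : (0:ℝ) ≤ nd^2/(2*t) - R^2*nd^2/(4*t^2) := by
    rw [div_sub_div _ _ (by positivity) (by positivity), div_nonneg_iff]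
    left
    refine ⟨?_, by positivity⟩
    nlinarith [mul_nonneg (mul_nonneg ht.le ht.le) (sq_nonneg nd), mul_nonneg ht.le (sq_nonneg nd),
      mul_le_mul_of_nonneg_right hRt (sq_nonneg nd)]
  have key : (1/2 - δ) * (nd^2*(u+R)^2/(4*t^2)) ≤
      ((u-R)^2/(4*t) + A') * (nd^2/(2*t) - R^2*nd^2/(4*t^2)) := by
    have hp := poly_key hδ0 hδ1 ht hR0 hu hRt (by nlinarith : 4*t ≤ 4*t*A')
    have h2 : ((u-R)^2/(4*t) + A') * (nd^2/(2*t) - R^2*nd^2/(4*t^2))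
        = ((u-R)^2 + 4*t*A') * (2*t - R^2) * (nd^2 / (16*t^3)) := by
      field_simp
      ring
    have h3 : (1/2 - δ) * (nd^2*(u+R)^2/(4*t^2))
        = (2 - 4*δ) * t * (u+R)^2 * (nd^2 / (16*t^3)) := by
      field_simp
      ring
    rw [h2, h3]
    exact mul_le_mul_of_nonneg_right hp (by positivity)
  have hL2' : Lv * (nd^2/(2*t) - R^2*nd^2/(4*t^2)) ≤ Lv * L2 :=
    mul_le_mul_of_nonneg_left hL2 hLvpos.le
  have hLk : ((u-R)^2/(4*t) + A') * (nd^2/(2*t) - R^2*nd^2/(4*t^2)) ≤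
      Lv * (nd^2/(2*t) - R^2*nd^2/(4*t^2)) := mul_le_mul_of_nonneg_right hLlow hlow2
  have hfin : (1/2 - δ) * L1^2 ≤ Lv * L2 := by
    calc (1/2 - δ) * L1^2 ≤ (1/2 - δ) * (nd^2*(u+R)^2/(4*t^2)) :=
          mul_le_mul_of_nonneg_left hL1 (by linarith)
      _ ≤ Lv * L2 := le_trans key (le_trans hLk hL2')
  nlinarith [sq_nonneg L1]

section Stmt0Aux
variable {n : ℕ} {φ : Eucl n → ℝ} {C R : ℝ}

lemma integrable_mul_phi (hm : Measurable φ) (hC : ∀ x, |φ x| ≤ C)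
    (hz : ∀ y : Eucl n, R < ‖y‖ → φ y = 0) {f : Eucl n → ℝ} (hf : Continuous f) :
    Integrable (fun y => f y * φ y) := by
  obtain ⟨M, hM⟩ := (isCompact_closedBall (0:Eucl n) R).exists_bound_of_continuousOn
    hf.continuousOn
  have hMC : Integrable ((Metric.closedBall (0:Eucl n) R).indicator (fun _ => M * C)) := by
    rw [integrable_indicator_iff measurableSet_closedBall]
    exact integrableOn_const measure_closedBall_lt_top.ne
  refine hMC.mono' ((hf.measurable.mul hm).aestronglyMeasurable) ?_
  refine Eventually.of_forall fun y => ?_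
  by_cases hy : y ∈ Metric.closedBall (0:Eucl n) R
  · rw [Set.indicator_of_mem hy]
    have h1 : |f y| ≤ M := by simpa using hM y hy
    calc ‖f y * φ y‖ = |f y| * |φ y| := abs_mul _ _
      _ ≤ M * C := mul_le_mul h1 (hC y) (abs_nonneg _) ((abs_nonneg (f y)).trans h1)
  · rw [Set.indicator_of_notMem hy]
    have : φ y = 0 := hz y (by simpa [Metric.mem_closedBall, dist_eq_norm] using hy)
    simp [this]

lemma integral_mul_phi_mono (hm : Measurable φ) (hC : ∀ x, |φ x| ≤ C)
    (hz : ∀ y : Eucl n, R < ‖y‖ → φ y = 0) (hpos : ∀ x, 0 ≤ φ x)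
    {f g : Eucl n → ℝ} (hf : Continuous f) (hg : Continuous g)
    (hfg : ∀ y : Eucl n, ‖y‖ ≤ R → f y ≤ g y) :
    ∫ y, f y * φ y ≤ ∫ y, g y * φ y := by
  refine integral_mono (integrable_mul_phi hm hC hz hf) (integrable_mul_phi hm hC hz hg) ?_
  intro y
  by_cases hy : ‖y‖ ≤ R
  · exact mul_le_mul_of_nonneg_right (hfg y hy) (hpos y)
  · simp [hz y (not_le.1 hy)]

lemma integral_mul_phi_pos (hm : Measurable φ) (hC : ∀ x, |φ x| ≤ C)
    (hz : ∀ y : Eucl n, R < ‖y‖ → φ y = 0) (hpos : ∀ x, 0 ≤ φ x) (hR0 : 0 ≤ R)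
    (hI : 0 < ∫ y, φ y) {f : Eucl n → ℝ} (hf : Continuous f) (hfpos : ∀ y, 0 < f y) :
    0 < ∫ y, f y * φ y := by
  obtain ⟨y₀, hy₀, hmin⟩ := (isCompact_closedBall (0:Eucl n) R).exists_isMinOn
    ⟨0, by simpa using hR0⟩ hf.continuousOn
  have hε : 0 < f y₀ := hfpos y₀
  have : (f y₀) * ∫ y, φ y ≤ ∫ y, f y * φ y := by
    rw [← integral_const_mul]
    refine integral_mono (by
      simpa using (integrable_mul_phi hm hC hz continuous_const)) (integrable_mul_phi hm hC hz hf) ?_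
    intro y
    by_cases hy : ‖y‖ ≤ R
    · exact mul_le_mul_of_nonneg_right (hmin (by simpa [Metric.mem_closedBall, dist_eq_norm] using hy)) (hpos y)
    · simp [hz y (not_le.1 hy)]
  exact lt_of_lt_of_le (by positivity) this

lemma hasDerivAt_integral_exp (hm : Measurable φ) (hC : ∀ x, |φ x| ≤ C)
    (hz : ∀ y : Eucl n, R < ‖y‖ → φ y = 0) (hR0 : 0 ≤ R)
    {a w v : Eucl n → ℝ} (ha : Continuous a) (hw : Continuous w) (hv : Continuous v)
    (s₀ : ℝ) :
    HasDerivAt (fun s => ∫ y, v y * Real.exp (a y + s * w y) * φ y)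
      (∫ y, (v y * w y) * Real.exp (a y + s₀ * w y) * φ y) s₀ := by
  obtain ⟨Ma, hMa⟩ := (isCompact_closedBall (0:Eucl n) R).exists_bound_of_continuousOn
    ha.continuousOn
  obtain ⟨Mw, hMw⟩ := (isCompact_closedBall (0:Eucl n) R).exists_bound_of_continuousOn
    hw.continuousOn
  obtain ⟨Mv, hMv⟩ := (isCompact_closedBall (0:Eucl n) R).exists_bound_of_continuousOn
    hv.continuousOn
  have hMw0 : 0 ≤ Mw := le_trans (norm_nonneg _) (hMw 0 (by simpa using hR0))
  have hMv0 : 0 ≤ Mv := le_trans (norm_nonneg _) (hMv 0 (by simpa using hR0))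
  have hC0 : 0 ≤ C := le_trans (abs_nonneg _) (hC 0)
  set B : ℝ := Ma + (|s₀| + 1) * Mw with hB
  set bound : Eucl n → ℝ :=
    (Metric.closedBall (0:Eucl n) R).indicator (fun _ => Mv * Mw * Real.exp B * C) with hbd
  have hexpB : ∀ (y : Eucl n) (s : ℝ), ‖y‖ ≤ R → s ∈ Metric.ball s₀ 1 →
      Real.exp (a y + s * w y) ≤ Real.exp B := by
    intro y s hy hs
    apply Real.exp_le_exp.2
    have h1 : a y ≤ Ma := le_trans (le_abs_self _) (hMa y (by simpa [Metric.mem_closedBall, dist_eq_norm] using hy))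
    have h2 : |w y| ≤ Mw := hMw y (by simpa [Metric.mem_closedBall, dist_eq_norm] using hy)
    have h3 : |s| ≤ |s₀| + 1 := by
      have := Metric.mem_ball.1 hs
      rw [Real.dist_eq] at this
      have := abs_sub_abs_le_abs_sub s s₀
      linarith
    have : s * w y ≤ (|s₀| + 1) * Mw := by
      calc s * w y ≤ |s * w y| := le_abs_self _
        _ = |s| * |w y| := abs_mul _ _
        _ ≤ (|s₀| + 1) * Mw := mul_le_mul h3 h2 (abs_nonneg _) (by positivity)
    linarith
  have key := hasDerivAt_integral_of_dominated_loc_of_deriv_le (μ := volume)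
    (F := fun s y => v y * Real.exp (a y + s * w y) * φ y)
    (F' := fun s y => (v y * w y) * Real.exp (a y + s * w y) * φ y)
    (x₀ := s₀) (bound := bound) (s := Metric.ball s₀ 1) (Metric.ball_mem_nhds s₀ one_pos)
    (Eventually.of_forall fun s =>
      (((hv.mul ((ha.add (continuous_const.mul hw)).rexp)).measurable.mul hm).aestronglyMeasurable))
    (integrable_mul_phi hm hC hz (hv.mul ((ha.add (continuous_const.mul hw)).rexp)))
    ((((hv.mul hw).mul ((ha.add (continuous_const.mul hw)).rexp)).measurable.mul hm).aestronglyMeasurable)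
    (Eventually.of_forall ?_) ?_ (Eventually.of_forall ?_)
  · exact key.2
  · intro y s hs
    by_cases hy : ‖y‖ ≤ R
    · rw [hbd, Set.indicator_of_mem (by simpa [Metric.mem_closedBall, dist_eq_norm] using hy)]
      have h2 : |w y| ≤ Mw := hMw y (by simpa [Metric.mem_closedBall, dist_eq_norm] using hy)
      have h3 : |v y| ≤ Mv := hMv y (by simpa [Metric.mem_closedBall, dist_eq_norm] using hy)
      have h4 := hexpB y s hy hs
      calc ‖v y * w y * Real.exp (a y + s * w y) * φ y‖
          = |v y| * |w y| * Real.exp (a y + s * w y) * |φ y| := by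
            rw [Real.norm_eq_abs, abs_mul, abs_mul, abs_mul, abs_of_pos (Real.exp_pos _)]
        _ ≤ Mv * Mw * Real.exp B * C := by
            gcongr <;> first | positivity | exact hC y
    · show ‖v y * w y * Real.exp (a y + s * w y) * φ y‖ ≤ bound y
      rw [hz y (not_le.1 hy)]
      simp only [mul_zero, norm_zero, hbd,
        Set.indicator_of_notMem (by simpa [Metric.mem_closedBall, dist_eq_norm] using hy :
          y ∉ Metric.closedBall (0:Eucl n) R)]
      exact le_refl 0
  · rw [hbd, integrable_indicator_iff measurableSet_closedBall]
    exact integrableOn_const measure_closedBall_lt_top.ne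
  · intro y s hs
    have h1 : HasDerivAt (fun s : ℝ => a y + s * w y) (w y) s :=
      (hasDerivAt_mul_const (w y)).const_add (a y)
    have h2 : HasDerivAt (fun s : ℝ => Real.exp (a y + s * w y))
        (Real.exp (a y + s * w y) * w y) s := (Real.hasDerivAt_exp _).comp s h1
    have h3 := (h2.const_mul (v y)).mul_const (φ y)
    exact h3.congr_deriv (by ring)

lemma cont_kern {t : ℝ} (ht : 0 < t) (p : Eucl n) :
    Continuous (fun y : Eucl n => Real.exp ((inner ℝ p y : ℝ) / (2*t) - ‖y‖^2/(4*t))) :=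
  (((continuous_const.inner continuous_id).div_const _).sub
    ((continuous_norm.pow 2).div_const _)).rexp

lemma Kfun_pos (hm : Measurable φ) (hC : ∀ x, |φ x| ≤ C)
    (hz : ∀ y : Eucl n, R < ‖y‖ → φ y = 0) (hpos : ∀ x, 0 ≤ φ x) (hR0 : 0 ≤ R)
    (hI : 0 < ∫ y, φ y) {t : ℝ} (ht : 0 < t) (p : Eucl n) : 0 < Kfun n φ t p :=
  integral_mul_phi_pos hm hC hz hpos hR0 hI (cont_kern ht p) (fun y => Real.exp_pos _)

lemma heatFlow_eq_exp (hm : Measurable φ) (hC : ∀ x, |φ x| ≤ C)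
    (hz : ∀ y : Eucl n, R < ‖y‖ → φ y = 0) (hpos : ∀ x, 0 ≤ φ x) (hR0 : 0 ≤ R)
    (hI : 0 < ∫ y, φ y) {t : ℝ} (ht : 0 < t) (p : Eucl n) :
    heatFlow n φ t p = Real.exp (-(gfun n φ t p)) := by
  have hK := Kfun_pos hm hC hz hpos hR0 hI ht p
  have h1 : ∀ y : Eucl n, Real.exp (-‖p - y‖ ^ 2 / (4 * t)) * φ y
      = Real.exp (-‖p‖^2/(4*t)) * (Real.exp ((inner ℝ p y : ℝ)/(2*t) - ‖y‖^2/(4*t)) * φ y) := by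
    intro y
    rw [← mul_assoc, ← Real.exp_add]
    congr 2
    rw [norm_sub_sq_real]
    field_simp
    ring
  have h2 : heatFlow n φ t p
      = (4*Real.pi*t)^(-(n:ℝ)/2) * (Real.exp (-‖p‖^2/(4*t)) * Kfun n φ t p) := by
    have h2' : (∫ y : Eucl n, Real.exp (-‖p - y‖ ^ 2 / (4 * t)) * φ y)
        = Real.exp (-‖p‖^2/(4*t)) * Kfun n φ t p := by
      unfold Kfun
      rw [← integral_const_mul]
      congr 1
      funext y
      exact h1 y
    unfold heatFlow
    rw [h2']
  have h3 : (4*Real.pi*t)^(-(n:ℝ)/2) = Real.exp (-((n:ℝ)/2 * Real.log (4*Real.pi*t))) := by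
    rw [Real.rpow_def_of_pos (by positivity)]
    congr 1
    ring
  have h4 : -(gfun n φ t p) = (-((n:ℝ)/2 * Real.log (4*Real.pi*t)))
      + ((-(‖p‖^2/(4*t))) + Real.log (Kfun n φ t p)) := by
    rw [gfun]; ring
  rw [h2, h3, h4, Real.exp_add, Real.exp_add, Real.exp_log hK]
  congr 2
  rw [neg_div]

lemma gfun_lower (hm : Measurable φ) (hC : ∀ x, |φ x| ≤ C)
    (hz : ∀ y : Eucl n, R < ‖y‖ → φ y = 0) (hpos : ∀ x, 0 ≤ φ x) (hR0 : 0 ≤ R)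
    (hI : 0 < ∫ y, φ y) {t : ℝ} (ht : 0 < t) (p : Eucl n) :
    (‖p‖ - R)^2/(4*t) + ((n:ℝ)/2 * Real.log (4*Real.pi*t) - Real.log (∫ y, φ y) - R^2/(4*t))
      ≤ gfun n φ t p := by
  have hK := Kfun_pos hm hC hz hpos hR0 hI ht p
  have hKle : Kfun n φ t p ≤ Real.exp (‖p‖*R/(2*t)) * ∫ y, φ y := by
    have h := integral_mul_phi_mono hm hC hz hpos (cont_kern ht p) continuous_const
      (g := fun _ => Real.exp (‖p‖*R/(2*t))) ?_
    · calc Kfun n φ t p ≤ ∫ y, Real.exp (‖p‖*R/(2*t)) * φ y := h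
        _ = Real.exp (‖p‖*R/(2*t)) * ∫ y, φ y := integral_const_mul _ _
    · intro y hy
      apply Real.exp_le_exp.2
      have h1 : (inner ℝ p y : ℝ) ≤ ‖p‖ * ‖y‖ := real_inner_le_norm p y
      have h2 : (inner ℝ p y : ℝ)/(2*t) ≤ ‖p‖*R/(2*t) := by
        rw [div_le_div_iff_of_pos_right (by linarith : (0:ℝ) < 2*t)]
        calc (inner ℝ p y : ℝ) ≤ ‖p‖ * ‖y‖ := h1
          _ ≤ ‖p‖ * R := mul_le_mul_of_nonneg_left hy (norm_nonneg p)
      have h3 : 0 ≤ ‖y‖^2/(4*t) := by positivity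
      linarith
  have hlog : Real.log (Kfun n φ t p) ≤ ‖p‖*R/(2*t) + Real.log (∫ y, φ y) := by
    calc Real.log (Kfun n φ t p) ≤ Real.log (Real.exp (‖p‖*R/(2*t)) * ∫ y, φ y) :=
          Real.log_le_log hK hKle
      _ = ‖p‖*R/(2*t) + Real.log (∫ y, φ y) := by
          rw [Real.log_mul (Real.exp_ne_zero _) hI.ne', Real.log_exp]
  have hq : (‖p‖-R)^2/(4*t) - R^2/(4*t) = ‖p‖^2/(4*t) - ‖p‖*R/(2*t) := by
    field_simp
    ring
  rw [gfun]
  linarith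

set_option maxHeartbeats 2000000 in
lemma line_convex (hm : Measurable φ) (hC : ∀ x, |φ x| ≤ C)
    (hz : ∀ y : Eucl n, R < ‖y‖ → φ y = 0) (hpos : ∀ x, 0 ≤ φ x) (hR0 : 0 ≤ R)
    (hI : 0 < ∫ y, φ y)
    {t β δ A' : ℝ} (ht : 0 < t) (hβ0 : 0 < β) (hδ0 : 0 < δ) (hδ1 : δ ≤ 1/2)
    (hδβ : 1 - β ≤ 1/2 - δ) (hA' : 1 ≤ A') (hRt : R^2 ≤ δ*t)
    (hglow : ∀ p : Eucl n, (‖p‖ - R)^2/(4*t) + A' ≤ gfun n φ t p)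
    (x d : Eucl n) :
    ConvexOn ℝ Set.univ (fun s : ℝ => (gfun n φ t (x + s • d)) ^ β) := by
  set nd : ℝ := ‖d‖ with hnd
  have hnd0 : 0 ≤ nd := norm_nonneg d
  set ip : ℝ := (inner ℝ x d : ℝ) with hip
  set a : Eucl n → ℝ := fun y => (inner ℝ x y : ℝ)/(2*t) - ‖y‖^2/(4*t) with ha_def
  set w : Eucl n → ℝ := fun y => (inner ℝ d y : ℝ)/(2*t) with hw_def
  have ha : Continuous a := ((continuous_const.inner continuous_id).div_const _).sub
    ((continuous_norm.pow 2).div_const _)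
  have hw : Continuous w := (continuous_const.inner continuous_id).div_const _
  set κ : ℝ → ℝ := fun s => ∫ y, Real.exp (a y + s * w y) * φ y with hκ_def
  set κ₁ : ℝ → ℝ := fun s => ∫ y, w y * Real.exp (a y + s * w y) * φ y with hκ₁_def
  set κ₂ : ℝ → ℝ := fun s => ∫ y, (w y * w y) * Real.exp (a y + s * w y) * φ y with hκ₂_def
  have hcont_e : ∀ s : ℝ, Continuous (fun y => Real.exp (a y + s * w y)) :=
    fun s => (ha.add (continuous_const.mul hw)).rexp
  have hκpos : ∀ s, 0 < κ s := fun s =>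
    integral_mul_phi_pos hm hC hz hpos hR0 hI (hcont_e s) (fun y => Real.exp_pos _)
  have hκd : ∀ s, HasDerivAt κ (κ₁ s) s := by
    intro s
    have h := hasDerivAt_integral_exp hm hC hz hR0 ha hw continuous_const (v := fun _ => 1) s
    simpa only [one_mul] using h
  have hκ₁d : ∀ s, HasDerivAt κ₁ (κ₂ s) s := fun s =>
    hasDerivAt_integral_exp hm hC hz hR0 ha hw hw s
  -- identification of gfun along the line
  set L : ℝ → ℝ := fun s =>
    (n:ℝ)/2 * Real.log (4*Real.pi*t) + (‖x‖^2 + 2*s*ip + s^2*nd^2)/(4*t) - Real.log (κ s)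
    with hL_def
  have hgL : ∀ s : ℝ, gfun n φ t (x + s • d) = L s := by
    intro s
    have h1 : Kfun n φ t (x + s • d) = κ s := by
      unfold Kfun
      congr 1
      funext y
      congr 2
      rw [inner_add_left, real_inner_smul_left]
      simp only [ha_def, hw_def]
      ring
    have h2 : ‖x + s • d‖^2 = ‖x‖^2 + 2*s*ip + s^2*nd^2 := by
      rw [norm_add_sq_real, real_inner_smul_right, norm_smul, Real.norm_eq_abs, mul_pow, sq_abs]
      ring
    simp only [gfun, h1, h2, hL_def]
  -- pointwise bound on w
  set b : ℝ := R * nd / (2*t) with hb_def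
  have hb0 : 0 ≤ b := by positivity
  have hwb : ∀ y : Eucl n, ‖y‖ ≤ R → |w y| ≤ b := by
    intro y hy
    have h1 : |(inner ℝ d y : ℝ)| ≤ nd * R := by
      calc |(inner ℝ d y : ℝ)| ≤ ‖d‖ * ‖y‖ := abs_real_inner_le_norm d y
        _ ≤ nd * R := by
            apply mul_le_mul_of_nonneg_left hy hnd0
    have : |w y| = |(inner ℝ d y : ℝ)| / (2*t) := by
      rw [hw_def]
      rw [abs_div, abs_of_pos (by linarith : (0:ℝ) < 2*t)]
    rw [this, hb_def]
    rw [div_le_div_iff_of_pos_right (by linarith : (0:ℝ) < 2*t)]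
    linarith
  have hb1 : ∀ s, |κ₁ s| ≤ b * κ s := by
    intro s
    have hup : κ₁ s ≤ b * κ s := by
      have := integral_mul_phi_mono hm hC hz hpos (hw.mul (hcont_e s))
        (continuous_const.mul (hcont_e s))
        (f := fun y => w y * Real.exp (a y + s * w y))
        (g := fun y => b * Real.exp (a y + s * w y))
        (fun y hy => mul_le_mul_of_nonneg_right (le_trans (le_abs_self _) (hwb y hy))
          (Real.exp_pos _).le)
      calc κ₁ s ≤ ∫ y, b * Real.exp (a y + s * w y) * φ y := this
        _ = b * κ s := by
            rw [hκ_def]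
            rw [← integral_const_mul]
            congr 1; funext y; ring
    have hdn : -(b * κ s) ≤ κ₁ s := by
      have := integral_mul_phi_mono hm hC hz hpos
        (continuous_const.mul (hcont_e s)) (hw.mul (hcont_e s))
        (f := fun y => (-b) * Real.exp (a y + s * w y))
        (g := fun y => w y * Real.exp (a y + s * w y))
        (fun y hy => mul_le_mul_of_nonneg_right (neg_le_of_abs_le (hwb y hy))
          (Real.exp_pos _).le)
      calc -(b * κ s) = ∫ y, (-b) * Real.exp (a y + s * w y) * φ y := by
            rw [hκ_def, ← integral_const_mul]
            rw [← integral_neg]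
            congr 1; funext y; ring
        _ ≤ κ₁ s := this
    exact abs_le.2 ⟨by linarith, hup⟩
  have hb2 : ∀ s, κ₂ s ≤ b^2 * κ s := by
    intro s
    have := integral_mul_phi_mono hm hC hz hpos ((hw.mul hw).mul (hcont_e s))
      (continuous_const.mul (hcont_e s))
      (f := fun y => (w y * w y) * Real.exp (a y + s * w y))
      (g := fun y => b^2 * Real.exp (a y + s * w y))
      (fun y hy => by
        have h := hwb y hy
        have : w y * w y ≤ b^2 := by nlinarith [abs_nonneg (w y), le_abs_self (w y), neg_abs_le (w y)]
        exact mul_le_mul_of_nonneg_right this (Real.exp_pos _).le)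
    calc κ₂ s ≤ ∫ y, b^2 * Real.exp (a y + s * w y) * φ y := this
      _ = b^2 * κ s := by
          rw [hκ_def, ← integral_const_mul]
          congr 1; funext y; ring
  -- derivatives of L
  set L1 : ℝ → ℝ := fun s => (2*ip + 2*s*nd^2)/(4*t) - κ₁ s / κ s with hL1_def
  set L2 : ℝ → ℝ := fun s =>
    nd^2/(2*t) - (κ₂ s * κ s - κ₁ s * κ₁ s)/(κ s)^2 with hL2_def
  have hLd : ∀ s, HasDerivAt L (L1 s) s := by
    intro s
    have hP : HasDerivAt (fun s : ℝ => ‖x‖^2 + 2*s*ip + s^2*nd^2) (2*ip + 2*s*nd^2) s := by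
      have h1 : HasDerivAt (fun s : ℝ => 2*s) 2 s := by
        simpa using (hasDerivAt_id s).const_mul (2:ℝ)
      have h2 : HasDerivAt (fun s : ℝ => s^2) (2*s) s := by
        simpa using hasDerivAt_pow 2 s
      have := ((hasDerivAt_const s (‖x‖^2)).add (h1.mul_const ip)).add (h2.mul_const (nd^2))
      exact this.congr_deriv (by ring)
    have hlog : HasDerivAt (fun s => Real.log (κ s)) (κ₁ s / κ s) s := by
      have := (Real.hasDerivAt_log (hκpos s).ne').comp s (hκd s)
      exact this.congr_deriv (by rw [div_eq_inv_mul])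
    have := ((hasDerivAt_const s ((n:ℝ)/2 * Real.log (4*Real.pi*t))).add
      (hP.div_const (4*t))).sub hlog
    exact this.congr_deriv (by rw [hL1_def]; ring)
  have hL1d : ∀ s, HasDerivAt L1 (L2 s) s := by
    intro s
    have hP : HasDerivAt (fun s : ℝ => (2*ip + 2*s*nd^2)/(4*t)) (nd^2/(2*t)) s := by
      have h1 : HasDerivAt (fun s : ℝ => 2*ip + 2*s*nd^2) (2*nd^2) s := by
        have h2 : HasDerivAt (fun s : ℝ => 2*s) 2 s := by
          simpa using (hasDerivAt_id s).const_mul (2:ℝ)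
        have := (hasDerivAt_const s (2*ip)).add (h2.mul_const (nd^2))
        exact this.congr_deriv (by ring)
      have := h1.div_const (4*t)
      exact this.congr_deriv (by rw [div_eq_div_iff (by positivity) (by positivity)]; ring)
    have hq : HasDerivAt (fun s => κ₁ s / κ s)
        ((κ₂ s * κ s - κ₁ s * κ₁ s)/(κ s)^2) s := by
      have := (hκ₁d s).div (hκd s) (hκpos s).ne'
      exact this
    exact hP.sub hq
  have hLpos : ∀ s, 0 < L s := by
    intro s
    have h1 := hglow (x + s • d)
    rw [hgL s] at h1
    have h2 : 0 ≤ (‖x + s • d‖ - R)^2 / (4*t) := by positivity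
    exact lt_of_lt_of_le (by linarith) h1
  -- bounds on L1 and L2
  have hL1b : ∀ s, (L1 s)^2 ≤ nd^2*(‖x + s • d‖+R)^2/(4*t^2) := by
    intro s
    set u : ℝ := ‖x + s • d‖ with hu_def
    have hu0 : 0 ≤ u := norm_nonneg _
    have hiden : (2*ip + 2*s*nd^2)/(4*t) = (inner ℝ (x + s • d) d : ℝ)/(2*t) := by
      rw [inner_add_left, real_inner_smul_left, real_inner_self_eq_norm_sq]
      rw [div_eq_div_iff (by positivity : (4*t:ℝ) ≠ 0) (by positivity : (2*t:ℝ) ≠ 0)]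
      ring
    have habs : |L1 s| ≤ nd*(u+R)/(2*t) := by
      have h1 : |(inner ℝ (x + s • d) d : ℝ)/(2*t)| ≤ u*nd/(2*t) := by
        rw [abs_div, abs_of_pos (by linarith : (0:ℝ) < 2*t)]
        rw [div_le_div_iff_of_pos_right (by linarith : (0:ℝ) < 2*t)]
        calc |(inner ℝ (x + s • d) d : ℝ)| ≤ ‖x + s • d‖ * ‖d‖ := abs_real_inner_le_norm _ _
          _ = u * nd := rfl
      have h2 : |κ₁ s / κ s| ≤ b := by
        rw [abs_div, abs_of_pos (hκpos s)]
        rw [div_le_iff₀ (hκpos s)]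
        exact hb1 s
      calc |L1 s| ≤ |(2*ip + 2*s*nd^2)/(4*t)| + |κ₁ s / κ s| := by
            rw [hL1_def]; exact abs_sub _ _
        _ ≤ u*nd/(2*t) + b := by
            rw [hiden]
            exact add_le_add h1 h2
        _ = nd*(u+R)/(2*t) := by
            rw [hb_def]
            field_simp
    calc (L1 s)^2 = |L1 s|^2 := (sq_abs _).symm
      _ ≤ (nd*(u+R)/(2*t))^2 := by
          apply pow_le_pow_left₀ (abs_nonneg _) habs
      _ = nd^2*(u+R)^2/(4*t^2) := by
          rw [div_pow, mul_pow]
          congr 1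
          ring
  have hL2b : ∀ s, nd^2/(2*t) - R^2*nd^2/(4*t^2) ≤ L2 s := by
    intro s
    have hvar : (κ₂ s * κ s - κ₁ s * κ₁ s)/(κ s)^2 ≤ R^2*nd^2/(4*t^2) := by
      rw [div_le_iff₀ (pow_pos (hκpos s) 2)]
      have h1 := mul_le_mul_of_nonneg_right (hb2 s) (hκpos s).le
      have h2 : b^2 = R^2*nd^2/(4*t^2) := by
        rw [hb_def]
        field_simp
        ring
      nlinarith [mul_self_nonneg (κ₁ s), sq_nonneg (κ s)]
    rw [hL2_def]
    simp only
    linarith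
  -- the power function and its derivatives
  set G : ℝ → ℝ := fun s => L s ^ β with hG_def
  set G1 : ℝ → ℝ := fun s => β * L s ^ (β - 1) * L1 s with hG1_def
  have hGd : ∀ s, HasDerivAt G (G1 s) s := by
    intro s
    have h := (Real.hasDerivAt_rpow_const (x := L s) (p := β)
      (Or.inl (hLpos s).ne')).comp s (hLd s)
    exact h.congr_deriv (by rw [hG1_def])
  have hG1d : ∀ s, HasDerivAt G1
      (β * ((β-1) * L s ^ (β-2) * L1 s * L1 s + L s ^ (β-1) * L2 s)) s := by
    intro s
    have h1 := (Real.hasDerivAt_rpow_const (x := L s) (p := β - 1)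
      (Or.inl (hLpos s).ne')).comp s (hLd s)
    rw [show β - 1 - 1 = β - 2 from by ring] at h1
    have h1' : HasDerivAt (fun s => L s ^ (β-1)) ((β - 1) * L s ^ (β - 2) * L1 s) s := h1
    have h2 : HasDerivAt (fun s => β * L s ^ (β-1) * L1 s)
        (β * ((β - 1) * L s ^ (β - 2) * L1 s) * L1 s + β * L s ^ (β-1) * L2 s) s :=
      (h1'.const_mul β).mul (hL1d s)
    exact h2.congr_deriv (by ring)
  have hG2nonneg : ∀ s, 0 ≤ β * ((β-1) * L s ^ (β-2) * L1 s * L1 s + L s ^ (β-1) * L2 s) := by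
    intro s
    have hkey := scalar_key (β := β) hδ0 hδ1 hδβ ht hR0 (norm_nonneg (x + s • d)) hnd0 hA' hRt
      ((hgL s) ▸ hglow (x + s • d)) (hL1b s) (hL2b s)
    have hr : L s ^ (β-1) = L s ^ (β-2) * L s := by
      rw [show β-1 = (β-2)+1 from by ring, Real.rpow_add (hLpos s), Real.rpow_one]
    have hrp : 0 ≤ L s ^ (β-2) := (Real.rpow_pos_of_pos (hLpos s) _).le
    have heq : (β-1) * L s ^ (β-2) * L1 s * L1 s + L s ^ (β-1) * L2 s
        = L s ^ (β-2) * (L s * L2 s + (β-1) * (L1 s)^2) := by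
      rw [hr]
      ring
    rw [heq]
    exact mul_nonneg hβ0.le (mul_nonneg hrp hkey)
  have hGdiff : Differentiable ℝ G := fun s => (hGd s).differentiableAt
  have hderivG : deriv G = G1 := funext fun s => (hGd s).deriv
  have hG1diff : Differentiable ℝ G1 := fun s => (hG1d s).differentiableAt
  have hmain : ConvexOn ℝ Set.univ G := by
    apply convexOn_of_deriv2_nonneg convex_univ hGdiff.continuous.continuousOn
    · rw [interior_univ]
      exact hGdiff.differentiableOn
    · rw [interior_univ, hderivG]
      exact hG1diff.differentiableOn
    · intro s hs
      show 0 ≤ deriv (deriv G) s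
      rw [hderivG, (hG1d s).deriv]
      exact hG2nonneg s
  have hfin : (fun s : ℝ => gfun n φ t (x + s • d) ^ β) = G := by
    funext s
    rw [hgL, hG_def]
  rw [hfin]
  exact hmain

end Stmt0Aux

/-- For `φ ∈ 𝓛` and `β > 1/2`, the heat flow eventually takes values in
`[0,1)` and is `β`-log-concave (i.e. `Ψ_β`-concave), for all large times. -/
theorem stmt0 (n : ℕ) (hn : 1 ≤ n) (φ : Eucl n → ℝ) (hφ : memL n φ)
    (β : ℝ) (hβ : 1 / 2 < β) :
    ∃ T > (0 : ℝ), ∀ t ≥ T, FConcaveOn n 1 (Psi β) (heatFlow n φ t) := by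
  obtain ⟨hm, hpos, ⟨C, hC0⟩, hsupp, hI⟩ := hφ
  have hC : ∀ x, |φ x| ≤ C := fun x => by
    rw [abs_of_nonneg (hpos x)]
    exact hC0 x
  obtain ⟨R₀, hR₀⟩ := hsupp.isBounded.subset_closedBall (0 : Eucl n)
  set R : ℝ := max R₀ 0 with hR_def
  have hR0 : 0 ≤ R := le_max_right _ _
  have hz : ∀ y : Eucl n, R < ‖y‖ → φ y = 0 := by
    intro y hy
    by_contra h
    have hy' : y ∈ tsupport φ := subset_tsupport φ h
    have := hR₀ hy'
    rw [Metric.mem_closedBall, dist_zero_right] at this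
    have : ‖y‖ ≤ R := le_trans this (le_max_left _ _)
    linarith
  set I : ℝ := ∫ y : Eucl n, φ y with hI_def
  set δ : ℝ := min (β - 1/2) (1/2) with hδ_def
  have hδ0 : 0 < δ := lt_min (by linarith) one_half_pos
  have hδ1 : δ ≤ 1/2 := min_le_right _ _
  have hδβ : 1 - β ≤ 1/2 - δ := by
    have := min_le_left (β - 1/2) (1/2)
    linarith
  have hβ0 : 0 < β := by linarith
  set T : ℝ := max (max 1 (R^2/δ)) (Real.exp (4 + 2*Real.log I) / (4*Real.pi)) with hT_def
  refine ⟨T, lt_of_lt_of_le one_pos (le_trans (le_max_left _ _) (le_max_left _ _)), ?_⟩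
  intro t htT
  have ht1 : 1 ≤ t := le_trans (le_trans (le_max_left _ _) (le_max_left _ _)) htT
  have ht : 0 < t := by linarith
  have hRt : R^2 ≤ δ*t := by
    have h1 : R^2/δ ≤ t := le_trans (le_trans (le_max_right _ _) (le_max_left _ _)) htT
    rw [div_le_iff₀ hδ0] at h1
    linarith [mul_comm δ t]
  have hTexp : Real.exp (4 + 2*Real.log I) / (4*Real.pi) ≤ t :=
    le_trans (le_max_right _ _) htT
  have h4πt : 1 ≤ 4*Real.pi*t := by
    nlinarith [Real.pi_gt_three]
  have hlogt : 4 + 2*Real.log I ≤ Real.log (4*Real.pi*t) := by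
    rw [Real.le_log_iff_exp_le (by positivity)]
    rw [div_le_iff₀ (by positivity : (0:ℝ) < 4*Real.pi)] at hTexp
    linarith [mul_comm t (4*Real.pi)]
  set A' : ℝ := (n:ℝ)/2 * Real.log (4*Real.pi*t) - Real.log I - R^2/(4*t) with hA'_def
  have hA'1 : 1 ≤ A' := by
    have hlognn : 0 ≤ Real.log (4*Real.pi*t) := Real.log_nonneg h4πt
    have hn2 : 1/2 * Real.log (4*Real.pi*t) ≤ (n:ℝ)/2 * Real.log (4*Real.pi*t) := by
      apply mul_le_mul_of_nonneg_right _ hlognn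
      have : (1:ℝ) ≤ (n:ℝ) := by exact_mod_cast hn
      linarith
    have hRt4 : R^2/(4*t) ≤ 1 := by
      rw [div_le_one (by positivity)]
      nlinarith
    rw [hA'_def]
    nlinarith
  have hglow : ∀ p : Eucl n, (‖p‖ - R)^2/(4*t) + A' ≤ gfun n φ t p := fun p =>
    gfun_lower hm hC hz hpos hR0 hI ht p
  have hgpos : ∀ p : Eucl n, 0 < gfun n φ t p := by
    intro p
    have h1 := hglow p
    have h2 : 0 ≤ (‖p‖ - R)^2/(4*t) := by positivity
    exact lt_of_lt_of_le (lt_of_lt_of_le one_pos (le_trans hA'1 (le_add_of_nonneg_left h2))) h1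
  have hfe : ∀ p : Eucl n, heatFlow n φ t p = Real.exp (-(gfun n φ t p)) := fun p =>
    heatFlow_eq_exp hm hC hz hpos hR0 hI ht p
  constructor
  · intro p
    rw [hfe p]
    constructor
    · exact (Real.exp_pos _).le
    · rw [Real.exp_lt_one_iff]
      linarith [hgpos p]
  · intro x y μ hμ hx hy
    obtain ⟨hμ0, hμ1⟩ := hμ
    have hconv := line_convex hm hC hz hpos hR0 hI ht hβ0 hδ0 hδ1 hδβ hA'1 hRt hglow x (y - x)
    have hpt0 : x + (0:ℝ) • (y - x) = x := by simp
    have hpt1 : x + (1:ℝ) • (y - x) = y := by simp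
    have hptμ : x + μ • (y - x) = (1 - μ) • x + μ • y := by
      rw [smul_sub, sub_smul, one_smul]
      abel
    have h := hconv.2 (Set.mem_univ (0:ℝ)) (Set.mem_univ (1:ℝ))
      (by linarith : (0:ℝ) ≤ 1 - μ) hμ0.le (by ring)
    simp only [smul_eq_mul, mul_zero, mul_one, zero_add] at h
    -- h : gfun (x + μ•(y-x))^β ≤ (1-μ) * gfun (x+0•(y-x))^β + μ * gfun (x+1•(y-x))^β
    rw [hpt0, hpt1, hptμ] at h
    constructor
    · rw [hfe]
      exact Real.exp_pos _
    · rw [hfe, hfe, hfe]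
      simp only [Psi, Real.log_exp, neg_neg]
      linarith
end
end

section
/- Let d = n/2 and let F satisfy condition (F_a) with a ∈ (0,∞). If κ_F(r*) > 1/2 for some r* ∈ (0,∞), then there exists φ ∈ 𝓛 with M_φ < a such that U_{n/2}[φ] does not possess the eventual F-concavity property. -/
open MeasureTheory Filter Set

noncomputable section

/-! ### Auxiliary lemmas for `stmt4` -/

lemma aux_tendsto_sqrt_atTop : Tendsto Real.sqrt atTop atTop :=
  tendsto_atTop_atTop.2 fun b => ⟨b ^ 2, fun t ht => by
    calc b ≤ |b| := le_abs_self b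
    _ = Real.sqrt (b ^ 2) := (Real.sqrt_sq_eq_abs b).symm
    _ ≤ Real.sqrt t := Real.sqrt_le_sqrt ht⟩

lemma aux_U_eq (n : ℕ) (φ : Eucl n → ℝ) {t : ℝ} (ht : 0 < t) (x : Eucl n) :
    U n ((n : ℝ) / 2) φ t x = ∫ y : Eucl n, Real.exp (-‖x - y‖ ^ 2 / (4 * t)) * φ y := by
  unfold U heatFlow
  rw [← mul_assoc, ← Real.rpow_add (by positivity : 0 < 4 * Real.pi * t),
    show (n : ℝ) / 2 + -(n : ℝ) / 2 = 0 by ring, Real.rpow_zero, one_mul]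

lemma aux_U_indicator_eq (n : ℕ) (c₀ : ℝ) {t : ℝ} (ht : 0 < t) (x : Eucl n) :
    U n ((n : ℝ) / 2) ((Metric.closedBall (0 : Eucl n) 1).indicator fun _ => c₀) t x
      = ∫ y in Metric.closedBall (0 : Eucl n) 1, Real.exp (-‖x - y‖ ^ 2 / (4 * t)) * c₀ := by
  rw [aux_U_eq n _ ht x, ← integral_indicator (measurableSet_closedBall)]
  congr 1
  funext y
  by_cases hy : y ∈ Metric.closedBall (0 : Eucl n) 1
  · simp [Set.indicator_of_mem hy]
  · simp [Set.indicator_of_notMem hy]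

lemma aux_integrable_exp (n : ℕ) (c₀ t : ℝ) (x : Eucl n) :
    IntegrableOn (fun y : Eucl n => Real.exp (-‖x - y‖ ^ 2 / (4 * t)) * c₀)
      (Metric.closedBall (0 : Eucl n) 1) volume := by
  apply ContinuousOn.integrableOn_compact (isCompact_closedBall _ _)
  apply Continuous.continuousOn
  fun_prop

lemma aux_U_bound_low (n : ℕ) {c₀ : ℝ} (hc₀ : 0 ≤ c₀) {t : ℝ} (ht : 0 < t) (x : Eucl n) :
    (volume (Metric.closedBall (0 : Eucl n) 1)).toReal * c₀
        * Real.exp (-(‖x‖ + 1) ^ 2 / (4 * t))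
      ≤ U n ((n : ℝ) / 2) ((Metric.closedBall (0 : Eucl n) 1).indicator fun _ => c₀) t x := by
  rw [aux_U_indicator_eq n c₀ ht x]
  have h1 : (volume (Metric.closedBall (0 : Eucl n) 1)).toReal * c₀
      * Real.exp (-(‖x‖ + 1) ^ 2 / (4 * t))
      = ∫ _ in Metric.closedBall (0 : Eucl n) 1, Real.exp (-(‖x‖ + 1) ^ 2 / (4 * t)) * c₀ := by
    rw [setIntegral_const, smul_eq_mul, measureReal_def]; ring
  rw [h1]
  apply setIntegral_mono_on
  · exact (integrableOn_const (isCompact_closedBall _ _).measure_lt_top.ne)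
  · exact aux_integrable_exp n c₀ t x
  · exact measurableSet_closedBall
  · intro y hy
    have hy1 : ‖y‖ ≤ 1 := by simpa [mem_closedBall_zero_iff] using hy
    have hn1 : ‖x - y‖ ≤ ‖x‖ + 1 := (norm_sub_le x y).trans (by linarith)
    have hsq : ‖x - y‖ ^ 2 ≤ (‖x‖ + 1) ^ 2 := by nlinarith [norm_nonneg (x - y), norm_nonneg x]
    have hdiv : -(‖x‖ + 1) ^ 2 / (4 * t) ≤ -‖x - y‖ ^ 2 / (4 * t) :=
      div_le_div_of_nonneg_right (by linarith) (by linarith)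
    exact mul_le_mul_of_nonneg_right (Real.exp_le_exp.2 hdiv) hc₀

lemma aux_U_bound_up (n : ℕ) {c₀ : ℝ} (hc₀ : 0 ≤ c₀) {t : ℝ} (ht : 0 < t) {x : Eucl n}
    (hx : 1 ≤ ‖x‖) :
    U n ((n : ℝ) / 2) ((Metric.closedBall (0 : Eucl n) 1).indicator fun _ => c₀) t x
      ≤ (volume (Metric.closedBall (0 : Eucl n) 1)).toReal * c₀
          * Real.exp (-(‖x‖ - 1) ^ 2 / (4 * t)) := by
  rw [aux_U_indicator_eq n c₀ ht x]
  have h1 : (volume (Metric.closedBall (0 : Eucl n) 1)).toReal * c₀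
      * Real.exp (-(‖x‖ - 1) ^ 2 / (4 * t))
      = ∫ _ in Metric.closedBall (0 : Eucl n) 1, Real.exp (-(‖x‖ - 1) ^ 2 / (4 * t)) * c₀ := by
    rw [setIntegral_const, smul_eq_mul, measureReal_def]; ring
  rw [h1]
  apply setIntegral_mono_on
  · exact aux_integrable_exp n c₀ t x
  · exact (integrableOn_const (isCompact_closedBall _ _).measure_lt_top.ne)
  · exact measurableSet_closedBall
  · intro y hy
    have hy1 : ‖y‖ ≤ 1 := by simpa [mem_closedBall_zero_iff] using hy
    have hn1 : ‖x‖ - 1 ≤ ‖x - y‖ := by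
      have := norm_sub_norm_le x y
      linarith
    have hsq : (‖x‖ - 1) ^ 2 ≤ ‖x - y‖ ^ 2 := by nlinarith [norm_nonneg (x - y)]
    have hdiv : -‖x - y‖ ^ 2 / (4 * t) ≤ -(‖x‖ - 1) ^ 2 / (4 * t) :=
      div_le_div_of_nonneg_right (by linarith) (by linarith)
    exact mul_le_mul_of_nonneg_right (Real.exp_le_exp.2 hdiv) hc₀

lemma aux_exp_eq {s σ : ℝ} (hs : 0 < s) :
    -(2 * s * σ + 1) ^ 2 / (4 * s ^ 2) = -(σ + 1 / (2 * s)) ^ 2 := by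
  field_simp
  ring

lemma aux_exp_eq' {s σ : ℝ} (hs : 0 < s) :
    -(2 * s * σ - 1) ^ 2 / (4 * s ^ 2) = -(σ - 1 / (2 * s)) ^ 2 := by
  field_simp
  ring

lemma aux_U_bound_M (n : ℕ) {c₀ : ℝ} (hc₀ : 0 ≤ c₀) {t : ℝ} (ht : 0 < t) (x : Eucl n) :
    U n ((n : ℝ) / 2) ((Metric.closedBall (0 : Eucl n) 1).indicator fun _ => c₀) t x
      ≤ (volume (Metric.closedBall (0 : Eucl n) 1)).toReal * c₀ := by
  rw [aux_U_indicator_eq n c₀ ht x]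
  have h1 : (volume (Metric.closedBall (0 : Eucl n) 1)).toReal * c₀
      = ∫ _ in Metric.closedBall (0 : Eucl n) 1, c₀ := by
    rw [setIntegral_const, smul_eq_mul, measureReal_def]
  rw [h1]
  apply setIntegral_mono_on (aux_integrable_exp n c₀ t x)
    (integrableOn_const (isCompact_closedBall _ _).measure_lt_top.ne)
    measurableSet_closedBall
  intro y hy
  have he : Real.exp (-‖x - y‖ ^ 2 / (4 * t)) ≤ 1 := by
    apply Real.exp_le_one_iff.2
    apply div_nonpos_of_nonpos_of_nonneg (neg_nonpos.2 (by positivity)) (by positivity)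
  nlinarith

set_option maxHeartbeats 2000000

/-- let `d = n/2` and `F` satisfy (F_a) with `a ∈ (0,∞)`. If
`κ_F(r*) > 1/2` for some `r* ∈ (0,∞)`, then there exists `φ ∈ 𝓛` with `M_φ < a` such
that `U_{n/2}[φ]` does not possess the eventual `F`-concavity property. -/
theorem stmt4 (n : ℕ) (hn : 1 ≤ n) (a : ℝ) (ha : 0 < a) (F : ℝ → ℝ) (hF : CondFa a F)
    (hκ : ∃ rs : ℝ, 0 < rs ∧ 1 / 2 < kappaF a F rs) :
    ∃ φ : Eucl n → ℝ, memL n φ ∧ (∫ y : Eucl n, φ y) < a ∧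
      ¬ EventualFConcave n a F ((n : ℝ) / 2) φ := by
  obtain ⟨⟨hFcont, hFmono⟩, hC2, hF'⟩ := hF
  obtain ⟨rs, hrs, hκrs⟩ := hκ
  -- the auxiliary function 𝓕 and its derivatives
  set 𝓕 : ℝ → ℝ := calF a F with h𝓕def
  set G1 : ℝ → ℝ := deriv 𝓕 with hG1def
  set G2 : ℝ → ℝ := deriv G1 with hG2def
  have hg : ContDiff ℝ 2 (fun r : ℝ => a * Real.exp (-r)) :=
    contDiff_const.mul (contDiff_id.neg.exp)
  have hmaps : MapsTo (fun r : ℝ => a * Real.exp (-r)) (Ioi 0) (Ioo 0 a) := by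
    intro r hr
    have hr' : (0:ℝ) < r := hr
    have h1 : Real.exp (-r) < 1 := Real.exp_lt_one_iff.2 (by linarith)
    have h2 : 0 < Real.exp (-r) := Real.exp_pos _
    have h3 : a * Real.exp (-r) < a := by nlinarith
    have h4 : 0 < a * Real.exp (-r) := by positivity
    exact ⟨h4, h3⟩
  have hFc : ContDiffOn ℝ 2 𝓕 (Ioi 0) := by
    have := hC2.comp (hg.contDiffOn) hmaps
    exact this
  have hFc1 : ContDiffOn ℝ 1 G1 (Ioi 0) :=
    hFc.deriv_of_isOpen isOpen_Ioi (by norm_num)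
  have h𝓕diff : DifferentiableOn ℝ 𝓕 (Ioi 0) := hFc.differentiableOn (by norm_num)
  have hG1diff : DifferentiableOn ℝ G1 (Ioi 0) := hFc1.differentiableOn (by norm_num)
  have hG2cont : ContinuousOn G2 (Ioi 0) :=
    hFc1.continuousOn_deriv_of_isOpen isOpen_Ioi (by norm_num)
  have hD𝓕 : ∀ r ∈ Ioi (0 : ℝ), HasDerivAt 𝓕 (G1 r) r := fun r hr =>
    (h𝓕diff.differentiableAt (isOpen_Ioi.mem_nhds hr)).hasDerivAt
  have hDG1 : ∀ r ∈ Ioi (0 : ℝ), HasDerivAt G1 (G2 r) r := fun r hr =>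
    (hG1diff.differentiableAt (isOpen_Ioi.mem_nhds hr)).hasDerivAt
  -- G1 rs < 0
  have hgrs : a * Real.exp (-rs) ∈ Ioo 0 a := hmaps hrs
  have hFd : HasDerivAt F (deriv F (a * Real.exp (-rs))) (a * Real.exp (-rs)) :=
    (((hC2.differentiableOn (by norm_num)).differentiableAt
      (isOpen_Ioo.mem_nhds hgrs))).hasDerivAt
  have hinner : HasDerivAt (fun r : ℝ => a * Real.exp (-r)) (-(a * Real.exp (-rs))) rs := by
    have h1 : HasDerivAt (fun r : ℝ => Real.exp (-r)) (Real.exp (-rs) * (-1)) rs :=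
      (Real.hasDerivAt_exp (-rs)).comp rs (hasDerivAt_neg' rs)
    have := h1.const_mul a
    refine this.congr_deriv ?_
    ring
  have hchain : HasDerivAt 𝓕 (deriv F (a * Real.exp (-rs)) * -(a * Real.exp (-rs))) rs := by
    have := hFd.comp rs hinner
    exact this
  have hG1rs : G1 rs = deriv F (a * Real.exp (-rs)) * -(a * Real.exp (-rs)) := hchain.deriv
  have hG1neg : G1 rs < 0 := by
    rw [hG1rs]
    have h1 : 0 < deriv F (a * Real.exp (-rs)) := hF' _ hgrs
    have h2 : 0 < a * Real.exp (-rs) := hgrs.1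
    nlinarith
  -- the key inequality from κ_F(rs) > 1/2
  have hκ' : 1 / 2 < -rs * G2 rs / G1 rs := hκrs
  have hq0 : 0 < rs * G2 rs + G1 rs / 2 := by
    rw [lt_div_iff_of_neg hG1neg] at hκ'
    linarith
  have hG2pos : 0 < G2 rs := by nlinarith
  -- choice of c, M
  set c : ℝ := min (rs / 2) ((rs * G2 rs + G1 rs / 2) / (2 * G2 rs)) with hcdef
  have hc_pos : 0 < c := lt_min (by linarith) (by positivity)
  have hc_lt : c < rs := lt_of_le_of_lt (min_le_left _ _) (by linarith)
  have hkey : 0 < (rs - c) * G2 rs + G1 rs / 2 := by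
    have h1 : c ≤ (rs * G2 rs + G1 rs / 2) / (2 * G2 rs) := min_le_right _ _
    have h2 : c * (2 * G2 rs) ≤ rs * G2 rs + G1 rs / 2 := by
      rw [le_div_iff₀ (by positivity : (0:ℝ) < 2 * G2 rs)] at h1
      linarith
    nlinarith
  set M : ℝ := a * Real.exp (-c) with hMdef
  have hM0 : 0 < M := by positivity
  have hMa : M < a := by
    have h1 : Real.exp (-c) < 1 := Real.exp_lt_one_iff.2 (by linarith)
    have h2 : 0 < Real.exp (-c) := Real.exp_pos _
    nlinarith
  -- construction of φ
  set B : Set (Eucl n) := Metric.closedBall (0 : Eucl n) 1 with hBdef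
  set vol : ℝ := (volume B).toReal with hvoldef
  have hvol : 0 < vol :=
    ENNReal.toReal_pos (Metric.measure_closedBall_pos volume _ one_pos).ne'
      (isCompact_closedBall _ _).measure_lt_top.ne
  set c₀ : ℝ := M / vol with hc₀def
  have hc₀pos : 0 < c₀ := by positivity
  set φ : Eucl n → ℝ := B.indicator (fun _ => c₀) with hφdef
  have hMvol : vol * c₀ = M := by
    rw [hc₀def]
    field_simp
  have hφint : ∫ y : Eucl n, φ y = M := by
    rw [hφdef, integral_indicator measurableSet_closedBall, setIntegral_const, smul_eq_mul]
    exact hMvol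
  refine ⟨φ, ⟨?_, ?_, ⟨c₀, ?_⟩, ?_, ?_⟩, ?_, ?_⟩
  · exact measurable_const.indicator measurableSet_closedBall
  · intro x
    exact Set.indicator_nonneg (fun _ _ => hc₀pos.le) x
  · intro x
    by_cases hx : x ∈ B <;> simp [hφdef, Set.indicator_of_mem, Set.indicator_of_notMem, hx,
      hc₀pos.le]
  · exact HasCompactSupport.intro (isCompact_closedBall _ _) fun x hx =>
      Set.indicator_of_notMem hx _
  · rw [hφint]; exact hM0
  · rw [hφint]; exact hMa
  -- the main part: no eventual F-concavity
  rintro ⟨T, hT, hconc⟩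
  -- the direction vector
  set ξ : Eucl n := EuclideanSpace.single (⟨0, hn⟩ : Fin n) (1 : ℝ) with hξdef
  have hξnorm : ‖ξ‖ = 1 := by rw [hξdef, EuclideanSpace.norm_single]; exact norm_one
  have hsmulnorm : ∀ s : ℝ, 0 ≤ s → ‖s • ξ‖ = s := by
    intro s hs
    rw [norm_smul, hξnorm, mul_one, Real.norm_eq_abs, abs_of_nonneg hs]
  -- the section function V and its limit h
  set V : ℝ → ℝ → ℝ := fun σ t => U n ((n : ℝ) / 2) φ t ((2 * Real.sqrt t * σ) • ξ) with hVdef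
  set h : ℝ → ℝ := fun σ => F (M * Real.exp (-σ ^ 2)) with hhdef
  -- lower/upper bounds for U
  have hUlow : ∀ t : ℝ, 0 < t → ∀ x : Eucl n,
      M * Real.exp (-(‖x‖ + 1) ^ 2 / (4 * t)) ≤ U n ((n : ℝ) / 2) φ t x := by
    intro t ht x
    have := aux_U_bound_low n hc₀pos.le ht x
    rw [← hBdef, ← hvoldef, hMvol] at this
    exact this
  have hUup : ∀ t : ℝ, 0 < t → ∀ x : Eucl n, 1 ≤ ‖x‖ →
      U n ((n : ℝ) / 2) φ t x ≤ M * Real.exp (-(‖x‖ - 1) ^ 2 / (4 * t)) := by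
    intro t ht x hx
    have := aux_U_bound_up n hc₀pos.le ht hx
    rw [← hBdef, ← hvoldef, hMvol] at this
    exact this
  have hUposall : ∀ t : ℝ, 0 < t → ∀ x : Eucl n, 0 < U n ((n : ℝ) / 2) φ t x := by
    intro t ht x
    exact lt_of_lt_of_le (by positivity) (hUlow t ht x)
  have hUlta : ∀ t : ℝ, 0 < t → ∀ x : Eucl n, U n ((n : ℝ) / 2) φ t x < a := by
    intro t ht x
    refine lt_of_le_of_lt ?_ hMa
    have := aux_U_bound_M n hc₀pos.le ht x
    rw [← hBdef, ← hvoldef, hMvol] at this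
    exact this
  -- limit of F ∘ V
  have hδtend : Tendsto (fun t : ℝ => 1 / (2 * Real.sqrt t)) atTop (nhds 0) := by
    have h2s : Tendsto (fun t : ℝ => 2 * Real.sqrt t) atTop atTop :=
      aux_tendsto_sqrt_atTop.const_mul_atTop two_pos
    have h := tendsto_inv_atTop_zero.comp h2s
    have heq : (fun t : ℝ => 1 / (2 * Real.sqrt t))
        = (fun r : ℝ => r⁻¹) ∘ (fun t : ℝ => 2 * Real.sqrt t) := by
      funext t; simp [Function.comp, one_div]
    rw [heq]
    exact h
  have hMσIoo : ∀ σ : ℝ, 0 < σ → M * Real.exp (-σ ^ 2) ∈ Ioo (0 : ℝ) a := by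
    intro σ hσ
    have h1 : Real.exp (-σ ^ 2) < 1 := Real.exp_lt_one_iff.2 (by nlinarith)
    have h2 : 0 < Real.exp (-σ ^ 2) := Real.exp_pos _
    exact ⟨by positivity, by nlinarith⟩
  have htend : ∀ σ : ℝ, 0 < σ → Tendsto (fun t => F (V σ t)) atTop (nhds (h σ)) := by
    intro σ hσ
    have hFat : ContinuousAt F (M * Real.exp (-σ ^ 2)) :=
      hFcont.continuousAt (isOpen_Ioo.mem_nhds (hMσIoo σ hσ))
    have hlowB : ∀ᶠ t in atTop,
        M * Real.exp (-(σ + 1 / (2 * Real.sqrt t)) ^ 2) ≤ V σ t := by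
      filter_upwards [eventually_gt_atTop (0:ℝ)] with t ht
      have hst : 0 < Real.sqrt t := Real.sqrt_pos.2 ht
      have hxn : ‖(2 * Real.sqrt t * σ) • ξ‖ = 2 * Real.sqrt t * σ :=
        hsmulnorm _ (by positivity)
      have hb := hUlow t ht ((2 * Real.sqrt t * σ) • ξ)
      rw [hxn] at hb
      have hexp : -(2 * Real.sqrt t * σ + 1) ^ 2 / (4 * t)
          = -(σ + 1 / (2 * Real.sqrt t)) ^ 2 := by
        have h2 : Real.sqrt t ^ 2 = t := Real.sq_sqrt ht.le
        calc -(2 * Real.sqrt t * σ + 1) ^ 2 / (4 * t)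
            = -(2 * Real.sqrt t * σ + 1) ^ 2 / (4 * Real.sqrt t ^ 2) := by rw [h2]
          _ = -(σ + 1 / (2 * Real.sqrt t)) ^ 2 := aux_exp_eq hst
      rw [hexp] at hb
      exact hb
    have hupB : ∀ᶠ t in atTop,
        V σ t ≤ M * Real.exp (-(σ - 1 / (2 * Real.sqrt t)) ^ 2) := by
      filter_upwards [eventually_gt_atTop (0:ℝ),
        eventually_ge_atTop ((1 / (2 * σ)) ^ 2)] with t ht ht2
      have hst : 0 < Real.sqrt t := Real.sqrt_pos.2 ht
      have hsge : 1 / (2 * σ) ≤ Real.sqrt t := by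
        have := Real.sqrt_le_sqrt ht2
        rwa [Real.sqrt_sq (by positivity)] at this
      have hx1' : 1 ≤ 2 * Real.sqrt t * σ := by
        have := (div_le_iff₀ (by positivity : (0:ℝ) < 2 * σ)).mp hsge
        nlinarith
      have hxn : ‖(2 * Real.sqrt t * σ) • ξ‖ = 2 * Real.sqrt t * σ :=
        hsmulnorm _ (by positivity)
      have hb := hUup t ht ((2 * Real.sqrt t * σ) • ξ) (by rw [hxn]; exact hx1')
      rw [hxn] at hb
      have hexp : -(2 * Real.sqrt t * σ - 1) ^ 2 / (4 * t)
          = -(σ - 1 / (2 * Real.sqrt t)) ^ 2 := by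
        have h2 : Real.sqrt t ^ 2 = t := Real.sq_sqrt ht.le
        calc -(2 * Real.sqrt t * σ - 1) ^ 2 / (4 * t)
            = -(2 * Real.sqrt t * σ - 1) ^ 2 / (4 * Real.sqrt t ^ 2) := by rw [h2]
          _ = -(σ - 1 / (2 * Real.sqrt t)) ^ 2 := aux_exp_eq' hst
      rw [hexp] at hb
      exact hb
    have hlimlow : Tendsto (fun t => M * Real.exp (-(σ + 1 / (2 * Real.sqrt t)) ^ 2)) atTop
        (nhds (M * Real.exp (-σ ^ 2))) := by
      have hcont : Continuous (fun u : ℝ => M * Real.exp (-(σ + u) ^ 2)) := by fun_prop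
      have := (hcont.tendsto 0).comp hδtend
      simpa [Function.comp_def] using this
    have hlimup : Tendsto (fun t => M * Real.exp (-(σ - 1 / (2 * Real.sqrt t)) ^ 2)) atTop
        (nhds (M * Real.exp (-σ ^ 2))) := by
      have hcont : Continuous (fun u : ℝ => M * Real.exp (-(σ - u) ^ 2)) := by fun_prop
      have := (hcont.tendsto 0).comp hδtend
      simpa [Function.comp_def] using this
    have hVlim : Tendsto (fun t => V σ t) atTop (nhds (M * Real.exp (-σ ^ 2))) :=
      tendsto_of_tendsto_of_tendsto_of_le_of_le' hlimlow hlimup hlowB hupB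
    exact hFat.tendsto.comp hVlim
  -- concavity of h on (0,∞) in the limit
  have hcon : ∀ σ₁ : ℝ, 0 < σ₁ → ∀ σ₂ : ℝ, 0 < σ₂ → ∀ μ : ℝ, μ ∈ Ioo (0 : ℝ) 1 →
      (1 - μ) * h σ₁ + μ * h σ₂ ≤ h ((1 - μ) * σ₁ + μ * σ₂) := by
    intro σ₁ h1p σ₂ h2p μ hμ
    have hσ₀ : 0 < (1 - μ) * σ₁ + μ * σ₂ := by nlinarith [hμ.1, hμ.2]
    have hl : Tendsto (fun t => (1 - μ) * F (V σ₁ t) + μ * F (V σ₂ t)) atTop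
        (nhds ((1 - μ) * h σ₁ + μ * h σ₂)) :=
      ((htend σ₁ h1p).const_mul (1 - μ)).add ((htend σ₂ h2p).const_mul μ)
    have hr := htend ((1 - μ) * σ₁ + μ * σ₂) hσ₀
    apply le_of_tendsto_of_tendsto hl hr
    filter_upwards [eventually_ge_atTop T] with t ht
    have ht0 : 0 < t := lt_of_lt_of_le hT ht
    have hcc := hconc t ht
    have hx1 : 0 < U n ((n : ℝ) / 2) φ t ((2 * Real.sqrt t * σ₁) • ξ) := hUposall t ht0 _
    have hx2 : 0 < U n ((n : ℝ) / 2) φ t ((2 * Real.sqrt t * σ₂) • ξ) := hUposall t ht0 _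
    have hineq := (hcc.2 ((2 * Real.sqrt t * σ₁) • ξ) ((2 * Real.sqrt t * σ₂) • ξ) μ hμ
      hx1 hx2).2
    have hmid : (1 - μ) • ((2 * Real.sqrt t * σ₁) • ξ) + μ • ((2 * Real.sqrt t * σ₂) • ξ)
        = (2 * Real.sqrt t * ((1 - μ) * σ₁ + μ * σ₂)) • ξ := by
      rw [smul_smul, smul_smul, ← add_smul]
      congr 1
      ring
    rw [hmid] at hineq
    exact hineq
  -- h is smooth with h'' > 0 near σs
  have hh𝓕 : ∀ σ : ℝ, h σ = 𝓕 (σ ^ 2 + c) := by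
    intro σ
    rw [hhdef, h𝓕def]
    show F (M * Real.exp (-σ ^ 2)) = F (a * Real.exp (-(σ ^ 2 + c)))
    congr 1
    rw [hMdef, mul_assoc, ← Real.exp_add]
    ring_nf
  set σs : ℝ := Real.sqrt (rs - c) with hσsdef
  have hσs : 0 < σs := Real.sqrt_pos.2 (by linarith)
  have hσs2 : σs ^ 2 = rs - c := Real.sq_sqrt (by linarith)
  set h1 : ℝ → ℝ := fun σ => 2 * σ * G1 (σ ^ 2 + c) with hh1def
  set h2 : ℝ → ℝ := fun σ => 2 * G1 (σ ^ 2 + c) + 4 * σ ^ 2 * G2 (σ ^ 2 + c) with hh2def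
  have hqpos : ∀ σ : ℝ, (0 : ℝ) < σ ^ 2 + c := fun σ => by positivity
  have hqd : ∀ σ : ℝ, HasDerivAt (fun σ : ℝ => σ ^ 2 + c) (2 * σ) σ := by
    intro σ
    simpa using (hasDerivAt_pow 2 σ).add_const c
  have hDh : ∀ σ : ℝ, HasDerivAt h (h1 σ) σ := by
    intro σ
    have h𝓕' : HasDerivAt 𝓕 (G1 (σ ^ 2 + c)) (σ ^ 2 + c) := hD𝓕 _ (hqpos σ)
    have hcomp := h𝓕'.comp σ (hqd σ)
    have hfun : h = fun σ => 𝓕 (σ ^ 2 + c) := funext hh𝓕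
    rw [hfun]
    refine hcomp.congr_deriv ?_
    rw [hh1def]; ring
  have hDh1 : ∀ σ : ℝ, HasDerivAt h1 (h2 σ) σ := by
    intro σ
    have hG1comp : HasDerivAt (fun σ : ℝ => G1 (σ ^ 2 + c)) (G2 (σ ^ 2 + c) * (2 * σ)) σ :=
      by have := (hDG1 (σ ^ 2 + c) (hqpos σ)).comp σ (hqd σ); exact this
    have hlin : HasDerivAt (fun σ : ℝ => 2 * σ) 2 σ := by
      simpa using (hasDerivAt_id σ).const_mul 2
    have := hlin.mul hG1comp
    refine this.congr_deriv ?_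
    rw [hh2def]; ring
  have hderiv1 : deriv h = h1 := funext fun σ => (hDh σ).deriv
  have hderiv2 : ∀ σ : ℝ, deriv (deriv h) σ = h2 σ := fun σ => by
    rw [hderiv1]; exact (hDh1 σ).deriv
  -- continuity of h2 and positivity at σs
  have hqcont : ∀ σ : ℝ, ContinuousAt (fun σ : ℝ => σ ^ 2 + c) σ := by
    intro σ; fun_prop
  have hG1contAt : ∀ σ : ℝ, ContinuousAt (fun σ : ℝ => G1 (σ ^ 2 + c)) σ := by
    intro σ
    exact ContinuousAt.comp (g := G1) (f := fun σ : ℝ => σ ^ 2 + c) (x := σ)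
      (hG1diff.continuousOn.continuousAt (Ioi_mem_nhds (hqpos σ))) (hqcont σ)
  have hG2contAt : ∀ σ : ℝ, ContinuousAt (fun σ : ℝ => G2 (σ ^ 2 + c)) σ := by
    intro σ
    exact ContinuousAt.comp (g := G2) (f := fun σ : ℝ => σ ^ 2 + c) (x := σ)
      (hG2cont.continuousAt (Ioi_mem_nhds (hqpos σ))) (hqcont σ)
  have hh2contAt : ContinuousAt h2 σs := by
    rw [hh2def]
    exact (continuousAt_const.mul (hG1contAt σs)).add
      ((by fun_prop : ContinuousAt (fun σ : ℝ => 4 * σ ^ 2) σs).mul (hG2contAt σs))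
  have hh2pos : 0 < h2 σs := by
    have harg : σs ^ 2 + c = rs := by rw [hσs2]; ring
    show 0 < 2 * G1 (σs ^ 2 + c) + 4 * σs ^ 2 * G2 (σs ^ 2 + c)
    rw [harg, hσs2]
    linarith
  -- find an interval around σs where h'' > 0
  have hev2 : ∀ᶠ σ in nhds σs, 0 < h2 σ ∧ 0 < σ :=
    (hh2contAt.eventually (eventually_gt_nhds hh2pos)).and (eventually_gt_nhds hσs)
  obtain ⟨ε, hε, hball⟩ := Metric.eventually_nhds_iff.1 hev2
  set u : ℝ := σs - ε / 2 with hudef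
  set v : ℝ := σs + ε / 2 with hvdef
  have huv : u < v := by rw [hudef, hvdef]; linarith
  have hmem : ∀ σ : ℝ, σ ∈ Icc u v → 0 < h2 σ ∧ 0 < σ := by
    intro σ hσ
    obtain ⟨hσ1, hσ2⟩ := hσ
    rw [hudef] at hσ1
    rw [hvdef] at hσ2
    apply hball
    rw [Real.dist_eq, abs_lt]
    constructor <;> linarith
  have hupos : 0 < u := (hmem u ⟨le_refl u, huv.le⟩).2
  have hvpos : 0 < v := lt_trans hupos huv
  -- strict convexity of h on [u, v]
  have hsc : StrictConvexOn ℝ (Icc u v) h := by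
    apply strictConvexOn_of_deriv2_pos (convex_Icc u v)
    · exact fun σ _ => (hDh σ).differentiableAt.continuousAt.continuousWithinAt
    · intro σ hσ
      rw [interior_Icc] at hσ
      have : deriv^[2] h σ = deriv (deriv h) σ := by
        simp [Function.iterate_succ_apply']
      rw [this, hderiv2]
      exact (hmem σ (Ioo_subset_Icc_self hσ)).1
  -- contradiction
  have hstrict := hsc.2 (⟨le_refl u, huv.le⟩ : u ∈ Icc u v) (⟨huv.le, le_refl v⟩ : v ∈ Icc u v)
    huv.ne (by norm_num : (0:ℝ) < 1/2) (by norm_num : (0:ℝ) < 1/2) (by norm_num)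
  have hconuv := hcon u hupos v hvpos (1/2) (by norm_num)
  rw [show (1 : ℝ) - 1/2 = 1/2 by norm_num] at hconuv
  simp only [smul_eq_mul] at hstrict
  linarith
end
end

section
/- Let F be admissible on [0,∞). Assume that for every κ > 0 the function [0,∞) ∋ r ↦ F(κ e^{−r²}) is concave. Then F-concavity is weaker than log-concavity in 𝓐([0,∞)), i.e., every log-concave function f : ℝⁿ → [0,∞) is F-concave. -/
open MeasureTheory Filter Set

noncomputable section

open Topology in
/-- Auxiliary: `t ↦ F (exp t)` is midpoint-style concave. -/
lemma stmt17_Gkey (F : ℝ → ℝ) (hF : AdmissibleInf F)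
    (hconc : ∀ κ : ℝ, 0 < κ →
      ConcaveOn ℝ (Set.Ici (0 : ℝ)) (fun r : ℝ => F (κ * Real.exp (-r ^ 2))))
    (t1 t2 μ : ℝ) (hμ : μ ∈ Set.Ioo (0:ℝ) 1) :
    (1 - μ) * F (Real.exp t1) + μ * F (Real.exp t2) ≤
      F (Real.exp ((1 - μ) * t1 + μ * t2)) := by
  obtain ⟨hμ0, hμ1⟩ := hμ
  set tb := (1 - μ) * t1 + μ * t2 with htb
  have Gmono : ∀ s u : ℝ, s ≤ u → F (Real.exp s) ≤ F (Real.exp u) := by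
    intro s u h
    exact hF.2.monotoneOn (Real.exp_pos s) (Real.exp_pos u) (Real.exp_le_exp.2 h)
  -- main approximate step
  have key : ∀ ε : ℝ, 0 < ε →
      (1 - μ) * F (Real.exp t1) + μ * F (Real.exp t2) ≤ F (Real.exp (tb + ε)) := by
    intro ε hε
    set M := max t1 t2 with hM
    set c := M + 1 + μ * (1 - μ) * (t2 - t1) ^ 2 / (4 * ε) with hc
    have hμμ : 0 ≤ μ * (1 - μ) := by nlinarith
    have hq : 0 ≤ μ * (1 - μ) * (t2 - t1) ^ 2 / (4 * ε) := div_nonneg (by nlinarith [sq_nonneg (t2 - t1)]) (by linarith)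
    have hcM : M + 1 ≤ c := by simp [hc]; linarith
    have hct1 : t1 ≤ c := le_trans (le_trans (le_max_left t1 t2) (by linarith)) hcM
    have hct2 : t2 ≤ c := le_trans (le_trans (le_max_right t1 t2) (by linarith)) hcM
    set r1 := Real.sqrt (c - t1) with hr1
    set r2 := Real.sqrt (c - t2) with hr2
    have hr1sq : r1 ^ 2 = c - t1 := Real.sq_sqrt (by linarith)
    have hr2sq : r2 ^ 2 = c - t2 := Real.sq_sqrt (by linarith)
    set δ := μ * (1 - μ) * (r1 - r2) ^ 2 with hδ
    have hδ0 : 0 ≤ δ := by rw [hδ]; nlinarith [sq_nonneg (r1 - r2)]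
    -- the averaged point
    have hrbar : c - ((1 - μ) * r1 + μ * r2) ^ 2 = tb + δ := by
      rw [htb, hδ]; linear_combination (-(1 - μ)) * hr1sq - μ * hr2sq
    -- δ ≤ ε
    have hprod : (r1 - r2) * (r1 + r2) = t2 - t1 := by linear_combination hr1sq - hr2sq
    have hrM1 : Real.sqrt (c - M) ≤ r1 := Real.sqrt_le_sqrt (by simp [hM]; linarith [le_max_left t1 t2])
    have hrM2 : Real.sqrt (c - M) ≤ r2 := Real.sqrt_le_sqrt (by simp [hM]; linarith [le_max_right t1 t2])
    have hMsq : Real.sqrt (c - M) ^ 2 = c - M := Real.sq_sqrt (by linarith)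
    have hMpos : (0:ℝ) ≤ Real.sqrt (c - M) := Real.sqrt_nonneg _
    have hsumsq : 4 * (c - M) ≤ (r1 + r2) ^ 2 := by nlinarith
    have hdiffsq : (r1 - r2) ^ 2 * (4 * (c - M)) ≤ (t2 - t1) ^ 2 := by nlinarith [sq_nonneg (r1 - r2)]
    have hδε : δ ≤ ε := by
      have h4 : (0:ℝ) < 4 * (c - M) := by linarith
      set q := μ * (1 - μ) * (t2 - t1) ^ 2 / (4 * ε) with hqdef
      have hq4 : μ * (1 - μ) * (t2 - t1) ^ 2 = 4 * ε * q := by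
        rw [hqdef]; field_simp
      have hcMq : c - M = 1 + q := by rw [hc]; ring
      have h1 : δ * (4 * (c - M)) ≤ μ * (1 - μ) * (t2 - t1) ^ 2 := by
        calc δ * (4 * (c - M)) = μ * (1 - μ) * ((r1 - r2) ^ 2 * (4 * (c - M))) := by
              rw [hδ]; ring
          _ ≤ μ * (1 - μ) * (t2 - t1) ^ 2 := mul_le_mul_of_nonneg_left hdiffsq hμμ
      have h2 : μ * (1 - μ) * (t2 - t1) ^ 2 ≤ ε * (4 * (c - M)) := by
        have he : ε * (4 * (c - M)) = 4 * ε + 4 * ε * q := by rw [hcMq]; ring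
        linarith
      exact le_of_mul_le_mul_right (h1.trans h2) h4
    have hcon := (hconc (Real.exp c) (Real.exp_pos c)).2
      (Set.mem_Ici.mpr (Real.sqrt_nonneg (c - t1)))
      (Set.mem_Ici.mpr (Real.sqrt_nonneg (c - t2)))
      (by linarith : (0:ℝ) ≤ 1 - μ) hμ0.le (by ring)
    simp only [smul_eq_mul] at hcon
    have e1 : Real.exp c * Real.exp (-r1 ^ 2) = Real.exp t1 := by
      rw [← Real.exp_add]; congr 1; rw [hr1sq]; ring
    have e2 : Real.exp c * Real.exp (-r2 ^ 2) = Real.exp t2 := by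
      rw [← Real.exp_add]; congr 1; rw [hr2sq]; ring
    have ebar : Real.exp c * Real.exp (-((1 - μ) * r1 + μ * r2) ^ 2) = Real.exp (tb + δ) := by
      rw [← Real.exp_add]; exact congrArg Real.exp (by linarith [hrbar])
    rw [e1, e2, ebar] at hcon
    exact hcon.trans (Gmono _ _ (by linarith))
  have hcont : ContinuousAt (fun u : ℝ => F (Real.exp u)) tb := by
    have h1 : ContinuousAt F (Real.exp tb) :=
      hF.1.continuousAt (Ioi_mem_nhds (Real.exp_pos tb))
    exact h1.comp Real.continuous_exp.continuousAt
  have h1 : Tendsto (fun ε : ℝ => tb + ε) (𝓝[>] (0:ℝ)) (𝓝 tb) := by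
    have h : Tendsto (fun ε : ℝ => tb + ε) (𝓝 (0:ℝ)) (𝓝 (tb + 0)) :=
      (continuous_const.add continuous_id).tendsto (0:ℝ)
    rw [add_zero] at h
    exact h.mono_left nhdsWithin_le_nhds
  have h2 : Tendsto (fun ε : ℝ => F (Real.exp (tb + ε))) (𝓝[>] (0:ℝ))
      (𝓝 (F (Real.exp tb))) := hcont.tendsto.comp h1
  exact ge_of_tendsto h2 (eventually_nhdsWithin_of_forall (fun ε hε => key ε hε))

/-- let `F` be admissible on `[0,∞)`. If for every `κ > 0` the function
`[0,∞) ∋ r ↦ F(κ e^{-r²})` is concave, then every log-concave `f : ℝⁿ → [0,∞)` is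
`F`-concave. -/
theorem stmt17 (n : ℕ) (hn : 1 ≤ n) (F : ℝ → ℝ) (hF : AdmissibleInf F)
    (hconc : ∀ κ : ℝ, 0 < κ →
      ConcaveOn ℝ (Set.Ici (0 : ℝ)) (fun r : ℝ => F (κ * Real.exp (-r ^ 2)))) :
    ∀ f : Eucl n → ℝ, FConcaveOnInf n Real.log f → FConcaveOnInf n F f := by
  intro f hf
  obtain ⟨hf0, hf1⟩ := hf
  refine ⟨hf0, ?_⟩
  intro x y μ hμ hfx hfy
  obtain ⟨hz, hlog⟩ := hf1 x y μ hμ hfx hfy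
  refine ⟨hz, ?_⟩
  have h1 := stmt17_Gkey F hF hconc (Real.log (f x)) (Real.log (f y)) μ hμ
  rw [Real.exp_log hfx, Real.exp_log hfy] at h1
  refine h1.trans ?_
  have h2 : Real.exp ((1 - μ) * Real.log (f x) + μ * Real.log (f y)) ≤
      f ((1 - μ) • x + μ • y) := by
    calc Real.exp ((1 - μ) * Real.log (f x) + μ * Real.log (f y))
        ≤ Real.exp (Real.log (f ((1 - μ) • x + μ • y))) := Real.exp_le_exp.2 hlog
      _ = f ((1 - μ) • x + μ • y) := Real.exp_log hz
  exact hF.2.monotoneOn (Real.exp_pos _) hz h2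
end
end

section
/- Assume F satisfies condition (F_a) with a = 1. Let k > 0 and C* ∈ ℝ. Then limsup_{r→∞} (σ_F(r) − k log r) ≤ C* if and only if limsup_{r→∞} (ν_F(r) − 2k log r) ≤ 2C*. -/
open MeasureTheory Filter Set

noncomputable section

/-- `ν_F(r) = (r/κ_F(r))(κ_F(r) - 1/2)` if `κ_F(r) > 0`, and `ν_F(r) = -∞` otherwise
(for `a = 1`). -/
def nuF (F : ℝ → ℝ) (r : ℝ) : EReal :=
  if 0 < kappaF 1 F r then
    (((r / kappaF 1 F r) * (kappaF 1 F r - 1 / 2) : ℝ) : EReal)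
  else ⊥




open Asymptotics in
private lemma ereal_limsup_le_coe_iff (u : ℝ → EReal) (c : ℝ) :
    Filter.limsup u Filter.atTop ≤ ((c : ℝ) : EReal) ↔
      ∀ ε : ℝ, 0 < ε → ∀ᶠ r in Filter.atTop, u r ≤ (((c + ε : ℝ)) : EReal) := by
  constructor
  · intro h ε hε
    have hlt : Filter.limsup u Filter.atTop < ((c + ε : ℝ) : EReal) :=
      lt_of_le_of_lt h (by exact_mod_cast lt_add_of_pos_right c hε)
    exact (Filter.eventually_lt_of_limsup_lt hlt).mono fun r hr => hr.le
  · intro h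
    by_contra hc
    push_neg at hc
    obtain ⟨d, hd1, hd2⟩ := EReal.exists_between_coe_real hc
    have hdc : c < d := EReal.coe_lt_coe_iff.mp hd1
    have hle : Filter.limsup u Filter.atTop ≤ ((c + (d - c) : ℝ) : EReal) :=
      Filter.limsup_le_of_le (by isBoundedDefault) (h (d - c) (by linarith))
    rw [show c + (d - c) = d by ring] at hle
    exact absurd (lt_of_le_of_lt hle hd2) (lt_irrefl _)

/-- The key eventual asymptotic facts about `B r = 2 k log r + c`. -/
private lemma eventual_facts (k : ℝ) (hk : 0 < k) (c : ℝ) (ε : ℝ) (hε : 0 < ε) :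
    ∀ᶠ r in Filter.atTop, (1 : ℝ) ≤ r ∧ 0 ≤ 2 * k * Real.log r + c ∧
      2 * k * Real.log r + c ≤ r / 2 ∧
      (2 * k * Real.log r + c) ^ 2 ≤ (ε / 2) * r := by
  have hlog : Real.log =o[Filter.atTop] (id : ℝ → ℝ) := Real.isLittleO_log_id_atTop
  have hconst : ∀ a : ℝ, (fun _ : ℝ => a) =o[Filter.atTop] (id : ℝ → ℝ) := fun a =>
    Asymptotics.isLittleO_const_id_atTop a
  have hB : (fun r => 2 * k * Real.log r + c) =o[Filter.atTop] (id : ℝ → ℝ) :=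
    (hlog.const_mul_left (2 * k)).add (hconst c)
  have hB2 : (fun r => (2 * k * Real.log r + c) ^ 2) =o[Filter.atTop] (id : ℝ → ℝ) := by
    have h2 := (((Real.isLittleO_pow_log_id_atTop (n := 2)).const_mul_left ((2 * k) ^ 2)).add
      (hlog.const_mul_left (2 * (2 * k) * c))).add (hconst (c ^ 2))
    exact h2.congr_left fun x => by ring
  have e1 : ∀ᶠ r : ℝ in Filter.atTop, (1 : ℝ) ≤ r := Filter.eventually_ge_atTop 1
  have e2 : ∀ᶠ r in Filter.atTop, 0 ≤ 2 * k * Real.log r + c :=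
    ((Real.tendsto_log_atTop.const_mul_atTop (by linarith : (0 : ℝ) < 2 * k)).atTop_add
      tendsto_const_nhds).eventually_ge_atTop 0
  have e3 : ∀ᶠ r in Filter.atTop, 2 * k * Real.log r + c ≤ r / 2 := by
    filter_upwards [Asymptotics.isLittleO_iff.mp hB (by norm_num : (0 : ℝ) < 1 / 2),
      Filter.eventually_ge_atTop (0 : ℝ)] with r hr hr0
    rw [Real.norm_eq_abs, id_eq, Real.norm_eq_abs, abs_of_nonneg hr0] at hr
    calc 2 * k * Real.log r + c ≤ |2 * k * Real.log r + c| := le_abs_self _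
      _ ≤ 1 / 2 * r := hr
      _ = r / 2 := by ring
  have e4 : ∀ᶠ r in Filter.atTop, (2 * k * Real.log r + c) ^ 2 ≤ (ε / 2) * r := by
    filter_upwards [Asymptotics.isLittleO_iff.mp hB2 (by linarith : (0 : ℝ) < ε / 2),
      Filter.eventually_ge_atTop (0 : ℝ)] with r hr hr0
    rw [Real.norm_eq_abs, id_eq, Real.norm_eq_abs, abs_of_nonneg hr0] at hr
    calc (2 * k * Real.log r + c) ^ 2 ≤ |(2 * k * Real.log r + c) ^ 2| := le_abs_self _
      _ ≤ ε / 2 * r := hr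
  filter_upwards [e1, e2, e3, e4] with r a b cc d
  exact ⟨a, b, cc, d⟩

/-- assume `F` satisfies (F_a) with `a = 1`, and let `k > 0`, `C* ∈ ℝ`.
Then `limsup_{r→∞} (σ_F(r) - k log r) ≤ C*` iff
`limsup_{r→∞} (ν_F(r) - 2k log r) ≤ 2C*`. -/
theorem stmt18 (F : ℝ → ℝ) (hF : CondFa 1 F) (k : ℝ) (hk : 0 < k) (Cs : ℝ) :
    Filter.limsup (fun r => ((sigmaF 1 F r - k * Real.log r : ℝ) : EReal)) Filter.atTop
        ≤ ((Cs : ℝ) : EReal) ↔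
      Filter.limsup (fun r => nuF F r - ((2 * k * Real.log r : ℝ) : EReal)) Filter.atTop
        ≤ ((2 * Cs : ℝ) : EReal) := by
  constructor
  · intro h
    rw [ereal_limsup_le_coe_iff] at h ⊢
    intro ε hε
    have h1 := h (ε / 2) (by linarith)
    have h2 := eventual_facts k hk (2 * Cs + ε) ε hε
    filter_upwards [h1, h2] with r e1 e2
    obtain ⟨hr1, hD0, -, -⟩ := e2
    rw [EReal.coe_le_coe_iff] at e1
    simp only [sigmaF] at e1
    by_cases hκp : 0 < kappaF 1 F r
    · rw [nuF, if_pos hκp, ← EReal.coe_sub, EReal.coe_le_coe_iff]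
      set κ := kappaF 1 F r with hκdef
      set L := Real.log r with hLdef
      have key : r * (κ - 1 / 2) ≤ (2 * k * L + (2 * Cs + ε)) * κ := by
        rcases le_or_gt κ (1 / 2) with hc | hc
        · nlinarith [mul_nonneg hD0 hκp.le,
            mul_nonpos_of_nonneg_of_nonpos (by linarith : (0 : ℝ) ≤ r)
              (by linarith : κ - 1 / 2 ≤ 0)]
        · nlinarith [mul_nonneg hD0 (by linarith : (0 : ℝ) ≤ κ - 1 / 2)]
      have hdiv : (r / κ) * (κ - 1 / 2) ≤ 2 * k * L + (2 * Cs + ε) := by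
        rw [div_mul_eq_mul_div, div_le_iff₀ hκp]
        linarith [key]
      linarith [hdiv]
    · rw [nuF, if_neg hκp, EReal.bot_sub]
      exact bot_le
  · intro h
    rw [ereal_limsup_le_coe_iff] at h ⊢
    intro ε hε
    have h1 := h ε hε
    have h2 := eventual_facts k hk (2 * Cs + ε) ε hε
    filter_upwards [h1, h2] with r e1 e2
    obtain ⟨hr1, hB0, hBr, hB2⟩ := e2
    rw [EReal.coe_le_coe_iff]
    simp only [sigmaF]
    set κ := kappaF 1 F r with hκdef
    set L := Real.log r with hLdef
    set B := 2 * k * L + (2 * Cs + ε) with hBdef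
    by_cases hκp : 0 < κ
    · rw [nuF, if_pos hκp, ← EReal.coe_sub, EReal.coe_le_coe_iff] at e1
      have hν : (r / κ) * (κ - 1 / 2) ≤ B := by rw [hBdef]; linarith [e1]
      have f1 : r * (κ - 1 / 2) ≤ B * κ := by
        rw [div_mul_eq_mul_div, div_le_iff₀ hκp] at hν
        exact hν
      rcases le_or_gt κ (1 / 2) with hc | hc
      · have hle0 : r * (κ - 1 / 2) ≤ 0 :=
          mul_nonpos_of_nonneg_of_nonpos (by linarith) (by linarith)
        linarith [hle0, hB0]
      · have hP0 : (0 : ℝ) < r - B := by linarith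
        have hκup : κ ≤ r / (2 * (r - B)) := by
          rw [le_div_iff₀ (by linarith : (0 : ℝ) < 2 * (r - B))]
          nlinarith [f1]
        have hstep : r * (κ - 1 / 2) ≤ r * B / (2 * (r - B)) := by
          have hmul := mul_le_mul_of_nonneg_left hκup (by linarith : (0 : ℝ) ≤ r)
          have heq : r * (r / (2 * (r - B))) - r / 2 = r * B / (2 * (r - B)) := by
            field_simp
            ring
          nlinarith [hmul, heq]
        have hfin : r * B / (2 * (r - B)) ≤ B / 2 + ε / 2 := by
          rw [div_le_iff₀ (by linarith : (0 : ℝ) < 2 * (r - B))]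
          nlinarith [hB2, mul_nonneg hε.le (by linarith : (0 : ℝ) ≤ r / 2 - B)]
        have : k * L + Cs + ε = B / 2 + ε / 2 := by rw [hBdef]; ring
        linarith [hstep, hfin]
    · push_neg at hκp
      have hle0 : r * (κ - 1 / 2) ≤ 0 :=
        mul_nonpos_of_nonneg_of_nonpos (by linarith) (by linarith)
      linarith [hle0, hB0]
end
end
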